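/- arXiv:1103.3605 — 8 statements merged into one kernel-verified Lean document; each statement's English description precedes it below -/
import Mathlib

section
/- Let T ≥ 1, let H = {x : {0,...,T+1} → ℝ : x(0)=x(T+1)=0} with norm ‖x‖ = (∑_{k=1}^{T+1}|Δx(k−1)|²)^{1/2}, and let c₂ be the discrete Poincaré constant. Suppose f : {1,...,T} × ℝ → ℝ is continuous and there exist α < 1/(2c₂), β ∈ ℝ, and γ : {1,...,T} → ℝ with f(k,s) ≥ −α s² + β s + γ(k) for all k, s. Then the functional x ↦ ∑_{k=1}^{T+1} |Δx(k−1)|²/2 + ∑_{k=1}^{T} f(k, x(k)) is coercive on H and attains its minimum. -/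
/-- If `f(k,s) ≥ -α s² + β s + γ k` with `α < 1/(2c₂)` (`c₂` the discrete Poincaré constant),
then `x ↦ ∑ |Δx(k-1)|²/2 + ∑ f(k, x k)` is coercive on `H` and attains its minimum. -/
theorem stmt_5 (T : ℕ) (hT : 1 ≤ T)
    (S : Set (ℕ → ℝ))
    (hS : S = {x : ℕ → ℝ | x 0 = 0 ∧ ∀ k, T + 1 ≤ k → x k = 0})
    (N : (ℕ → ℝ) → ℝ)
    (hN : ∀ x, N x = Real.sqrt (∑ k ∈ Finset.Icc 1 (T + 1), (x k - x (k - 1)) ^ 2))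
    (c₂ : ℝ) (hc₂pos : 0 < c₂)
    (hc₂ : ∀ x ∈ S, ∑ k ∈ Finset.Icc 1 T, (x k) ^ 2 ≤
      c₂ * ∑ k ∈ Finset.Icc 1 (T + 1), (x k - x (k - 1)) ^ 2)
    (hc₂min : ∀ c' : ℝ, 0 < c' →
      (∀ x ∈ S, ∑ k ∈ Finset.Icc 1 T, (x k) ^ 2 ≤
        c' * ∑ k ∈ Finset.Icc 1 (T + 1), (x k - x (k - 1)) ^ 2) → c₂ ≤ c')
    (f : ℕ → ℝ → ℝ) (hf : ∀ k, Continuous (f k))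
    (α β : ℝ) (γ : ℕ → ℝ) (hα : α < 1 / (2 * c₂))
    (hbound : ∀ k ∈ Finset.Icc 1 T, ∀ s : ℝ, -α * s ^ 2 + β * s + γ k ≤ f k s)
    (Φ : (ℕ → ℝ) → ℝ)
    (hΦ : ∀ x, Φ x = (∑ k ∈ Finset.Icc 1 (T + 1), (x k - x (k - 1)) ^ 2 / 2) +
      ∑ k ∈ Finset.Icc 1 T, f k (x k)) :
    (∀ M : ℝ, ∃ R : ℝ, ∀ x ∈ S, R < N x → M < Φ x) ∧
    (∃ x₀ ∈ S, ∀ x ∈ S, Φ x₀ ≤ Φ x) := by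
  classical
  set a : ℝ := 1 / 2 - max α 0 * c₂ with ha_def
  have hmax0 : 0 ≤ max α 0 := le_max_right _ _
  have ha : 0 < a := by
    have h1 : max α 0 < 1 / (2 * c₂) := max_lt hα (by positivity)
    have h2 : max α 0 * c₂ < (1 / (2 * c₂)) * c₂ := by
      exact mul_lt_mul_of_pos_right h1 hc₂pos
    have h3 : (1 / (2 * c₂)) * c₂ = 1 / 2 := by field_simp
    rw [h3] at h2
    simp only [ha_def]
    linarith
  set B : ℝ := |β| * Real.sqrt (T * c₂) with hB_def
  have hB0 : 0 ≤ B := by positivity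
  set Γ : ℝ := ∑ k ∈ Finset.Icc 1 T, γ k with hΓ_def
  -- the quadratic lower bound
  have key : ∀ x ∈ S, a * (N x) ^ 2 - B * N x + Γ ≤ Φ x := by
    intro x hx
    set Qx : ℝ := ∑ k ∈ Finset.Icc 1 (T + 1), (x k - x (k - 1)) ^ 2 with hQx_def
    have hQx0 : 0 ≤ Qx := Finset.sum_nonneg fun k _ => sq_nonneg _
    have hNx : N x = Real.sqrt Qx := hN x
    have hNx0 : 0 ≤ N x := hNx ▸ Real.sqrt_nonneg _
    have hNxsq : (N x) ^ 2 = Qx := by rw [hNx, Real.sq_sqrt hQx0]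
    set Sx : ℝ := ∑ k ∈ Finset.Icc 1 T, (x k) ^ 2 with hSx_def
    have hSx0 : 0 ≤ Sx := Finset.sum_nonneg fun k _ => sq_nonneg _
    have hSxQ : Sx ≤ c₂ * Qx := hc₂ x hx
    set Px : ℝ := ∑ k ∈ Finset.Icc 1 T, x k with hPx_def
    have h1 : ∑ k ∈ Finset.Icc 1 T, (-α * x k ^ 2 + β * x k + γ k) ≤
        ∑ k ∈ Finset.Icc 1 T, f k (x k) :=
      Finset.sum_le_sum fun k hk => hbound k hk (x k)
    have h2 : ∑ k ∈ Finset.Icc 1 T, (-α * x k ^ 2 + β * x k + γ k) =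
        -α * Sx + β * Px + Γ := by
      rw [Finset.sum_add_distrib, Finset.sum_add_distrib, ← Finset.mul_sum, ← Finset.mul_sum]
    -- bound on the α-term
    have hαterm : -(max α 0 * (c₂ * Qx)) ≤ -α * Sx := by
      have : α * Sx ≤ max α 0 * (c₂ * Qx) :=
        mul_le_mul (le_max_left _ _) hSxQ hSx0 hmax0
      linarith
    -- bound on the β-term via Cauchy–Schwarz
    have hCS : Px ^ 2 ≤ T * Sx := by
      have := sq_sum_le_card_mul_sum_sq (s := Finset.Icc 1 T) (f := fun k => x k)
      simpa [Nat.card_Icc] using this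
    have hPabs : |Px| ≤ Real.sqrt (T * Sx) := by
      have : |Px| = Real.sqrt (Px ^ 2) := (Real.sqrt_sq_eq_abs Px).symm
      rw [this]
      exact Real.sqrt_le_sqrt hCS
    have hTS : Real.sqrt (T * Sx) ≤ Real.sqrt (T * c₂) * Real.sqrt Qx := by
      rw [← Real.sqrt_mul (by positivity)]
      apply Real.sqrt_le_sqrt
      have h' : (T : ℝ) * Sx ≤ T * (c₂ * Qx) :=
        mul_le_mul_of_nonneg_left hSxQ (by positivity)
      linarith [h']
    have hβterm : -(B * N x) ≤ β * Px := by
      have h3 : |β * Px| ≤ B * N x := by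
        rw [abs_mul, hB_def, hNx]
        exact mul_le_mul (le_refl _) (hPabs.trans hTS) (abs_nonneg _) (abs_nonneg _) |>.trans
          (le_of_eq (by ring))
      linarith [neg_abs_le (β * Px)]
    have hΦx : Φ x = Qx / 2 + ∑ k ∈ Finset.Icc 1 T, f k (x k) := by
      rw [hΦ x, hQx_def, Finset.sum_div]
    rw [hΦx, hNxsq]
    have : a * Qx = Qx / 2 - max α 0 * (c₂ * Qx) := by rw [ha_def]; ring
    nlinarith [h1, h2, hαterm, hβterm]
  -- coercivity with positive radius
  have coercive : ∀ M : ℝ, ∃ R : ℝ, 0 < R ∧ ∀ x ∈ S, R < N x → M < Φ x := by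
    intro M
    refine ⟨max 1 ((|M - Γ| + B) / a), lt_of_lt_of_le one_pos (le_max_left _ _),
      fun x hx hR => ?_⟩
    have h1 : 1 < N x := lt_of_le_of_lt (le_max_left _ _) hR
    have h2 : (|M - Γ| + B) / a < N x := lt_of_le_of_lt (le_max_right _ _) hR
    have h3 : |M - Γ| + B < N x * a := (div_lt_iff₀ ha).mp h2
    have h4 : 0 ≤ (N x - 1) * (a * N x - B) := by
      apply mul_nonneg (by linarith)
      nlinarith [abs_nonneg (M - Γ)]
    have h5 := key x hx
    nlinarith [le_abs_self (M - Γ)]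
  refine ⟨fun M => (coercive M).imp (fun R hR => hR.2), ?_⟩
  -- the embedding of ℝ^T into S
  set ι : EuclideanSpace ℝ (Fin T) → ℕ → ℝ :=
    fun v k => if h : 1 ≤ k ∧ k - 1 < T then v ⟨k - 1, h.2⟩ else 0 with hι_def
  have hιS : ∀ v, ι v ∈ S := by
    intro v
    rw [hS]
    constructor
    · simp [hι_def]
    · intro k hk
      simp only [hι_def]
      rw [dif_neg]
      rintro ⟨h1, h2⟩
      omega
  have hrep : ∀ x ∈ S, ι (WithLp.toLp 2 (fun i : Fin T => x (i.1 + 1))) = x := by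
    intro x hx
    rw [hS] at hx
    funext k
    simp only [hι_def]
    by_cases h : 1 ≤ k ∧ k - 1 < T
    · rw [dif_pos h]
      congr 1
      omega
    · rw [dif_neg h]
      rcases Nat.lt_or_ge k 1 with h1 | h1
      · interval_cases k
        exact hx.1.symm
      · exact (hx.2 k (by omega)).symm
  set g : EuclideanSpace ℝ (Fin T) → ℝ := fun v => Φ (ι v) with hg_def
  have hcoord : ∀ k, Continuous fun v : EuclideanSpace ℝ (Fin T) => ι v k := by
    intro k
    by_cases h : 1 ≤ k ∧ k - 1 < T
    · simp only [hι_def, dif_pos h]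
      exact PiLp.continuous_apply _ _ _
    · simp only [hι_def, dif_neg h]
      exact continuous_const
  have hgcont : Continuous g := by
    have hge : g = fun v => (∑ k ∈ Finset.Icc 1 (T + 1), (ι v k - ι v (k - 1)) ^ 2 / 2) +
        ∑ k ∈ Finset.Icc 1 T, f k (ι v k) := funext fun v => hΦ _
    rw [hge]
    apply Continuous.add
    · apply continuous_finset_sum
      intro k _
      exact (((hcoord k).sub (hcoord (k - 1))).pow 2).div_const 2
    · apply continuous_finset_sum
      intro k _
      exact (hf k).comp (hcoord k)
  -- sum over Icc equals sum over Fin T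
  have hIcc : ∀ h : ℕ → ℝ, ∑ k ∈ Finset.Icc 1 T, h k = ∑ i : Fin T, h (i.1 + 1) := by
    intro h
    rw [← Finset.Ico_add_one_right_eq_Icc, Finset.sum_Ico_eq_sum_range,
      Fin.sum_univ_eq_sum_range (fun i => h (i + 1)) T]
    simp only [Nat.add_sub_cancel]
    exact Finset.sum_congr rfl fun i _ => by rw [add_comm]
  have hιval : ∀ v : EuclideanSpace ℝ (Fin T), ∀ i : Fin T, ι v (i.1 + 1) = v i := by
    intro v i
    simp only [hι_def]
    rw [dif_pos ⟨by omega, by omega⟩]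
    have h : (⟨i.1 + 1 - 1, by omega⟩ : Fin T) = i := Fin.ext (by simp)
    rw [h]
  have hnorm : ∀ v : EuclideanSpace ℝ (Fin T),
      ∑ k ∈ Finset.Icc 1 T, (ι v k) ^ 2 = ‖v‖ ^ 2 := by
    intro v
    rw [hIcc (fun k => (ι v k) ^ 2)]
    have h1 : ‖v‖ ^ 2 = ∑ i : Fin T, (v i) ^ 2 := by
      rw [EuclideanSpace.norm_eq, Real.sq_sqrt (Finset.sum_nonneg fun i _ => by positivity)]
      exact Finset.sum_congr rfl fun i _ => by rw [Real.norm_eq_abs, sq_abs]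
    rw [h1]
    exact Finset.sum_congr rfl fun i _ => by rw [hιval v i]
  -- ‖v‖ ≤ √c₂ · N (ι v)
  have hnormN : ∀ v : EuclideanSpace ℝ (Fin T), ‖v‖ ≤ Real.sqrt c₂ * N (ι v) := by
    intro v
    have hQ0 : 0 ≤ ∑ k ∈ Finset.Icc 1 (T + 1), (ι v k - ι v (k - 1)) ^ 2 :=
      Finset.sum_nonneg fun k _ => sq_nonneg _
    have h1 : ‖v‖ ^ 2 ≤ c₂ * ∑ k ∈ Finset.Icc 1 (T + 1), (ι v k - ι v (k - 1)) ^ 2 := by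
      rw [← hnorm v]
      exact hc₂ (ι v) (hιS v)
    calc ‖v‖ = Real.sqrt (‖v‖ ^ 2) := (Real.sqrt_sq (norm_nonneg v)).symm
      _ ≤ Real.sqrt (c₂ * ∑ k ∈ Finset.Icc 1 (T + 1), (ι v k - ι v (k - 1)) ^ 2) :=
          Real.sqrt_le_sqrt h1
      _ = Real.sqrt c₂ * N (ι v) := by rw [Real.sqrt_mul (le_of_lt hc₂pos), hN]
  obtain ⟨R, hRpos, hR⟩ := coercive (Φ (ι 0))
  set R' : ℝ := R * Real.sqrt c₂ with hR'_def
  have hR'pos : 0 < R' := mul_pos hRpos (Real.sqrt_pos.mpr hc₂pos)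
  obtain ⟨v₀, hv₀K, hmin⟩ :=
    (isCompact_closedBall (0 : EuclideanSpace ℝ (Fin T)) R').exists_isMinOn
      ⟨0, by simp [le_of_lt hR'pos]⟩ hgcont.continuousOn
  have hglb : ∀ v, g v₀ ≤ g v := by
    intro v
    by_cases hv : v ∈ Metric.closedBall (0 : EuclideanSpace ℝ (Fin T)) R'
    · exact isMinOn_iff.mp hmin v hv
    · have hv' : R' < ‖v‖ := by
        simpa [Metric.mem_closedBall, dist_zero_right, not_le] using hv
      have hNv : R < N (ι v) := by
        have h1 : R * Real.sqrt c₂ < Real.sqrt c₂ * N (ι v) :=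
          lt_of_lt_of_le hv' (hnormN v)
        have h2 : 0 < Real.sqrt c₂ := Real.sqrt_pos.mpr hc₂pos
        nlinarith
      have h3 : Φ (ι 0) < Φ (ι v) := hR (ι v) (hιS v) hNv
      have h4 : g v₀ ≤ g 0 := isMinOn_iff.mp hmin 0 (by simp [le_of_lt hR'pos])
      simp only [hg_def] at h4 ⊢
      linarith
  refine ⟨ι v₀, hιS v₀, fun x hx => ?_⟩
  have h := hglb (WithLp.toLp 2 (fun i : Fin T => x (i.1 + 1)))
  simp only [hg_def] at h
  rwa [hrep x hx] at h
end

section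
/- Let A and B be nonempty compact convex subsets of finite-dimensional real normed spaces and J : A × B → ℝ continuous such that x ↦ J(x,y) is convex for each y ∈ B and y ↦ J(x,y) is concave for each x ∈ A. Then sup_{y∈B} inf_{x∈A} J(x,y) = inf_{x∈A} sup_{y∈B} J(x,y), and J has a saddle point (x₀,y₀) ∈ A × B, i.e., J(x₀,y) ≤ J(x₀,y₀) ≤ J(x,y₀) for all x ∈ A, y ∈ B. -/
open Finset in
lemma fan_finite {E : Type*} [NormedAddCommGroup E] [NormedSpace ℝ E]
    {ι : Type*} [Fintype ι] [Nonempty ι]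
    (A : Set E) (hAne : A.Nonempty) (hAconv : Convex ℝ A)
    (f : ι → E → ℝ) (hfconv : ∀ i, ConvexOn ℝ A (f i)) (p : ℝ)
    (hp : ∀ x ∈ A, ∃ i, p ≤ f i x) :
    ∃ μ : ι → ℝ, (∀ i, 0 ≤ μ i) ∧ (∑ i, μ i = 1) ∧ ∀ x ∈ A, p ≤ ∑ i, μ i * f i x := by
  classical
  set U : Set (ι → ℝ) := {z | ∃ x ∈ A, ∀ i, f i x < z i} with hU
  set V : Set (ι → ℝ) := {z | ∀ i, z i < p} with hV
  have hUopen : IsOpen U := by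
    have : U = ⋃ x ∈ A, ⋂ i, (fun z : ι → ℝ => z i) ⁻¹' Set.Ioi (f i x) := by
      ext z; simp [hU, Set.mem_iUnion, Set.mem_iInter]
    rw [this]
    exact isOpen_biUnion fun x _ => isOpen_iInter_of_finite fun i =>
      (continuous_apply i).isOpen_preimage _ isOpen_Ioi
  have hVopen : IsOpen V := by
    have : V = ⋂ i, (fun z : ι → ℝ => z i) ⁻¹' Set.Iio p := by
      ext z; simp [hV, Set.mem_iInter]
    rw [this]
    exact isOpen_iInter_of_finite fun i =>
      (continuous_apply i).isOpen_preimage _ isOpen_Iio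
  have combo_lt : ∀ (a b u v zz ww : ℝ), 0 ≤ a → 0 ≤ b → a + b = 1 →
      u < zz → v < ww → a * u + b * v < a * zz + b * ww := by
    intro a b u v zz ww ha hb hab hu hv
    rcases ha.eq_or_lt with rfl | ha'
    · simp only [zero_mul, zero_add]
      have hb1 : b = 1 := by linarith
      nlinarith
    · nlinarith [mul_le_mul_of_nonneg_left hv.le hb]
  have hUconv : Convex ℝ U := by
    rintro z₁ ⟨x₁, hx₁, h₁⟩ z₂ ⟨x₂, hx₂, h₂⟩ a b ha hb hab
    refine ⟨a • x₁ + b • x₂, hAconv hx₁ hx₂ ha hb hab, fun i => ?_⟩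
    calc f i (a • x₁ + b • x₂) ≤ a * f i x₁ + b * f i x₂ :=
          (hfconv i).2 hx₁ hx₂ ha hb hab
      _ < a * z₁ i + b * z₂ i := combo_lt _ _ _ _ _ _ ha hb hab (h₁ i) (h₂ i)
      _ = (a • z₁ + b • z₂) i := by simp [mul_comm]
  have hVconv : Convex ℝ V := by
    rintro z₁ h₁ z₂ h₂ a b ha hb hab i
    have h := combo_lt a b (z₁ i) (z₂ i) p p ha hb hab (h₁ i) (h₂ i)
    simp only [Pi.add_apply, Pi.smul_apply, smul_eq_mul]
    have : a * p + b * p = p := by rw [← add_mul, hab, one_mul]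
    linarith
  have hdisj : Disjoint V U := by
    rw [Set.disjoint_left]
    rintro z hzV ⟨x, hxA, hzU⟩
    obtain ⟨i, hi⟩ := hp x hxA
    exact absurd (lt_trans (hzU i) (hzV i)) (not_lt.2 hi)
  obtain ⟨g, u, hgV, hgU⟩ := geometric_hahn_banach_open_open hVconv hVopen hUconv hUopen hdisj
  obtain ⟨x₁, hx₁⟩ := hAne
  have hzU₁ : (fun i => f i x₁ + 1) ∈ U := ⟨x₁, hx₁, fun i => by simp⟩
  have hwV : ∀ ε : ℝ, 0 < ε → (fun _ : ι => p - ε) ∈ V := fun ε hε i => by simp [hε]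
  -- coordinates of g
  set lam : ι → ℝ := fun i => g (Pi.single i 1) with hlam
  have hg_eq : ∀ z : ι → ℝ, g z = ∑ i, z i * lam i := by
    intro z
    have hz : z = ∑ i, z i • (Pi.single i (1 : ℝ) : ι → ℝ) := by
      funext j
      simp [Finset.sum_apply, Pi.single_apply, mul_comm]
    conv_lhs => rw [hz]
    rw [map_sum]
    simp [hlam, smul_eq_mul]
  -- nonnegativity of lam
  have hlam_nonneg : ∀ i, 0 ≤ lam i := by
    intro i
    by_contra hneg
    push_neg at hneg
    set z : ι → ℝ := fun j => f j x₁ + 1 with hz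
    set t : ℝ := (g z - u + 1) / (-lam i) with ht
    have h1 : u < g z := hgU z hzU₁
    have htpos : 0 < t := div_pos (by linarith) (by linarith)
    have hmem : z + t • (Pi.single i (1:ℝ) : ι → ℝ) ∈ U := by
      refine ⟨x₁, hx₁, fun j => ?_⟩
      rcases eq_or_ne j i with rfl | hji
      · simp only [Pi.add_apply, Pi.smul_apply, Pi.single_eq_same, smul_eq_mul, mul_one, hz]
        linarith
      · simp [hz, Pi.single_eq_of_ne hji]
    have := hgU _ hmem
    rw [map_add, map_smul] at this
    have hgz : g (Pi.single i (1:ℝ)) = lam i := rfl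
    rw [hgz] at this
    have : u < g z + t * lam i := by simpa [smul_eq_mul] using this
    have ht2 : t * lam i = -(g z - u + 1) := by
      have hne : lam i ≠ 0 := hneg.ne
      rw [ht, div_mul_eq_mul_div, mul_div_assoc, div_neg, div_self hne]
      ring
    rw [ht2] at this
    linarith
  -- some lam is nonzero
  have hlam_ne : ∃ i, lam i ≠ 0 := by
    by_contra hall
    push_neg at hall
    have h1 := hgV _ (hwV 1 one_pos)
    have h2 := hgU _ hzU₁
    rw [hg_eq] at h1 h2
    simp [hall] at h1 h2
    linarith
  set T : ℝ := ∑ i, lam i with hT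
  have hTpos : 0 < T := by
    obtain ⟨i₀, hi₀⟩ := hlam_ne
    exact Finset.sum_pos' (fun i _ => hlam_nonneg i)
      ⟨i₀, Finset.mem_univ _, (hlam_nonneg i₀).lt_of_ne (Ne.symm hi₀)⟩
  refine ⟨fun i => lam i / T, fun i => div_nonneg (hlam_nonneg i) hTpos.le, ?_, ?_⟩
  · rw [← Finset.sum_div, ← hT, div_self hTpos.ne']
  · intro x hx
    have key : ∀ ε : ℝ, 0 < ε → (p - ε) * T < (∑ i, f i x * lam i) + ε * T := by
      intro ε hε
      have h1 : u < g (fun i => f i x + ε) := hgU _ ⟨x, hx, fun i => by simp [hε]⟩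
      have h2 : g (fun _ => p - ε) < u := hgV _ (hwV ε hε)
      rw [hg_eq] at h1 h2
      have e1 : ∑ i, (f i x + ε) * lam i = (∑ i, f i x * lam i) + ε * T := by
        rw [hT, Finset.mul_sum, ← Finset.sum_add_distrib]
        congr 1; ext i; ring
      have e2 : ∑ i, (p - ε) * lam i = (p - ε) * T := by
        rw [hT, Finset.mul_sum]
      rw [e1] at h1; rw [e2] at h2
      linarith
    have hpT : p * T ≤ ∑ i, f i x * lam i := by
      refine le_of_forall_pos_lt_add fun ε hε => ?_
      have := key (ε / (2 * T)) (by positivity)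
      have heq : (ε / (2 * T)) * T = ε / 2 := by field_simp
      nlinarith
    have : ∑ i, lam i / T * f i x = (∑ i, f i x * lam i) / T := by
      rw [Finset.sum_div]; congr 1; ext i; ring
    rw [this, le_div_iff₀ hTpos]
    linarith


lemma contOn_finset_sup' {X ι : Type*} [TopologicalSpace X] (s : Finset ι) (hs : s.Nonempty)
    (f : ι → X → ℝ) (A : Set X) (hf : ∀ i ∈ s, ContinuousOn (f i) A) :
    ContinuousOn (fun x => s.sup' hs fun i => f i x) A := by
  induction hs using Finset.Nonempty.cons_induction with
  | singleton a =>
      simp only [Finset.sup'_singleton]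
      exact hf a (by simp)
  | cons a s ha hs ih =>
      simp only [Finset.sup'_cons hs]
      exact (hf a (by simp)).sup (ih fun i hi => hf i (Finset.mem_cons_of_mem hi))

lemma fan_exists_x {E F : Type*} [NormedAddCommGroup E] [NormedSpace ℝ E]
    [NormedAddCommGroup F] [NormedSpace ℝ F]
    (A : Set E) (B : Set F)
    (hAne : A.Nonempty) (hAc : IsCompact A) (hAconv : Convex ℝ A)
    (hBne : B.Nonempty) (hBc : IsCompact B) (hBconv : Convex ℝ B)
    (J : E → F → ℝ)
    (hJcont : ContinuousOn (fun p : E × F => J p.1 p.2) (A ×ˢ B))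
    (hconv : ∀ y ∈ B, ConvexOn ℝ A fun x => J x y)
    (hconc : ∀ x ∈ A, ConcaveOn ℝ B fun y => J x y) :
    ∃ x₀ ∈ A, ∀ y ∈ B, J x₀ y ≤ ⨆ y : B, ⨅ x : A, J x ↑y := by
  classical
  haveI := hAne.to_subtype
  haveI := hBne.to_subtype
  obtain ⟨x₁, hx₁⟩ := hAne
  obtain ⟨M, hM⟩ := (hAc.prod hBc).exists_bound_of_continuousOn hJcont
  have hM' : ∀ x ∈ A, ∀ y ∈ B, |J x y| ≤ M := fun x hx y hy => by
    simpa [Real.norm_eq_abs] using hM (x, y) ⟨hx, hy⟩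
  have hJy : ∀ y ∈ B, ContinuousOn (fun x => J x y) A := fun y hy =>
    hJcont.comp ((continuous_id.prodMk continuous_const).continuousOn) fun x hx => ⟨hx, hy⟩
  set c : ℝ := ⨆ y : B, ⨅ x : A, J x ↑y with hc
  have hbbelow : ∀ y : B, BddBelow (Set.range fun x : A => J x ↑y) := by
    rintro y
    exact ⟨-M, by rintro _ ⟨x, rfl⟩; have := hM' x x.2 y y.2; exact neg_le_of_abs_le this |>.trans_eq rfl⟩
  have hbabove : BddAbove (Set.range fun y : B => ⨅ x : A, J x ↑y) := by
    refine ⟨M, ?_⟩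
    rintro _ ⟨y, rfl⟩
    exact le_trans (ciInf_le (hbbelow y) ⟨x₁, hx₁⟩) (le_of_abs_le (hM' x₁ hx₁ y y.2))
  set Z : B → Set E := fun y => {x ∈ A | J x ↑y ≤ c} with hZ
  have hZclosed : ∀ y : B, IsClosed (Z y) := by
    intro y
    have : Z y = A ∩ (fun x => J x ↑y) ⁻¹' Set.Iic c := by
      ext x; simp [hZ, Set.mem_setOf_eq]
    rw [this]
    exact (hJy y y.2).preimage_isClosed_of_isClosed hAc.isClosed isClosed_Iic
  have hfin : ∀ S : Finset B, (A ∩ ⋂ y ∈ S, Z y).Nonempty := by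
    intro S
    rcases S.eq_empty_or_nonempty with rfl | hS
    · exact ⟨x₁, hx₁, by simp⟩
    haveI : Nonempty {y : B // y ∈ S} := ⟨⟨hS.choose, hS.choose_spec⟩⟩
    set g : E → ℝ := fun x => S.sup' hS fun y => J x ↑y with hg
    have hgc : ContinuousOn g A :=
      contOn_finset_sup' S hS (fun y x => J x ↑y) A fun y _ => hJy y y.2
    obtain ⟨xs, hxsA, hxs⟩ := hAc.exists_isMinOn ⟨x₁, hx₁⟩ hgc
    set p : ℝ := g xs with hp
    obtain ⟨μ, hμ0, hμ1, hμ⟩ := fan_finite (ι := {y : B // y ∈ S}) A ⟨x₁, hx₁⟩ hAconv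
      (fun i x => J x ↑↑i) (fun i => hconv ↑↑i (i : B).2) p
      (by
        intro x hx
        obtain ⟨y, hyS, hy⟩ := Finset.exists_mem_eq_sup' hS fun y => J x (↑y : F)
        refine ⟨⟨y, hyS⟩, ?_⟩
        show p ≤ J x (↑y : F)
        have h2 : g x = J x ↑y := hy
        exact (hxs hx).trans_eq h2)
    set yb : F := ∑ i : {y : B // y ∈ S}, μ i • ((i : B) : F) with hyb
    have hybB : yb ∈ B :=
      hBconv.sum_mem (fun i _ => hμ0 i) (by simpa using hμ1) fun i _ => (i : B).2
    have hple : ∀ x ∈ A, p ≤ J x yb := by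
      intro x hx
      refine le_trans (hμ x hx) ?_
      have := (hconc x hx).le_map_sum (t := Finset.univ) (w := μ)
        (p := fun i : {y : B // y ∈ S} => ((i : B) : F))
        (fun i _ => hμ0 i) (by simpa using hμ1) (fun i _ => (i : B).2)
      simpa [smul_eq_mul, hyb] using this
    have hpc : p ≤ c := by
      have h1 : p ≤ ⨅ x : A, J x yb := le_ciInf fun x => hple x x.2
      have h2 : (⨅ x : A, J x ((⟨yb, hybB⟩ : B) : F)) ≤ c :=
        le_ciSup hbabove (⟨yb, hybB⟩ : B)
      exact h1.trans h2
    refine ⟨xs, hxsA, ?_⟩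
    rw [Set.mem_iInter₂]
    intro y hyS
    exact ⟨hxsA, le_trans (Finset.le_sup' (fun y : B => J xs ↑y) hyS) hpc⟩
  obtain ⟨x₀, hx₀A, hx₀⟩ := hAc.inter_iInter_nonempty Z hZclosed fun S => by
    simpa using hfin S
  refine ⟨x₀, hx₀A, fun y hy => ?_⟩
  have := Set.mem_iInter.1 hx₀ ⟨y, hy⟩
  exact this.2



/-- Finite-dimensional Fan/von Neumann min-max theorem: a continuous convex–concave
function on a product of nonempty compact convex sets satisfies `sup inf = inf sup`
and has a saddle point. -/
theorem stmt_6 {E F : Type*}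
    [NormedAddCommGroup E] [NormedSpace ℝ E] [FiniteDimensional ℝ E]
    [NormedAddCommGroup F] [NormedSpace ℝ F] [FiniteDimensional ℝ F]
    (A : Set E) (B : Set F)
    (hAne : A.Nonempty) (hAc : IsCompact A) (hAconv : Convex ℝ A)
    (hBne : B.Nonempty) (hBc : IsCompact B) (hBconv : Convex ℝ B)
    (J : E → F → ℝ)
    (hJcont : ContinuousOn (fun p : E × F => J p.1 p.2) (A ×ˢ B))
    (hconv : ∀ y ∈ B, ConvexOn ℝ A (fun x => J x y))
    (hconc : ∀ x ∈ A, ConcaveOn ℝ B (fun y => J x y)) :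
    (⨆ y : B, ⨅ x : A, J x y) = (⨅ x : A, ⨆ y : B, J x y) ∧
    ∃ x₀ ∈ A, ∃ y₀ ∈ B, ∀ x ∈ A, ∀ y ∈ B, J x₀ y ≤ J x₀ y₀ ∧ J x₀ y₀ ≤ J x y₀ := by
  classical
  haveI := hAne.to_subtype
  haveI := hBne.to_subtype
  obtain ⟨x₁, hx₁⟩ := hAne
  obtain ⟨y₁, hy₁⟩ := hBne
  obtain ⟨M, hM⟩ := (hAc.prod hBc).exists_bound_of_continuousOn hJcont
  have hM' : ∀ x ∈ A, ∀ y ∈ B, |J x y| ≤ M := fun x hx y hy => by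
    simpa [Real.norm_eq_abs] using hM (x, y) ⟨hx, hy⟩
  set c : ℝ := ⨆ y : B, ⨅ x : A, J x ↑y with hc
  set d : ℝ := ⨅ x : A, ⨆ y : B, J x ↑y with hd
  have hbA : ∀ y : B, BddBelow (Set.range fun x : A => J ↑x ↑y) := fun y =>
    ⟨-M, by rintro _ ⟨x, rfl⟩; exact neg_le_of_abs_le (hM' x x.2 y y.2)⟩
  have hbB : ∀ x : A, BddAbove (Set.range fun y : B => J ↑x ↑y) := fun x =>
    ⟨M, by rintro _ ⟨y, rfl⟩; exact le_of_abs_le (hM' x x.2 y y.2)⟩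
  have hbd : BddBelow (Set.range fun x : A => ⨆ y : B, J ↑x ↑y) := by
    refine ⟨-M, ?_⟩
    rintro _ ⟨x, rfl⟩
    exact le_trans (neg_le_of_abs_le (hM' x x.2 y₁ hy₁)) (le_ciSup (hbB x) ⟨y₁, hy₁⟩)
  obtain ⟨x₀, hx₀A, hx₀⟩ := fan_exists_x A B ⟨x₁, hx₁⟩ hAc hAconv ⟨y₁, hy₁⟩ hBc hBconv J
    hJcont hconv hconc
  have heq : c = d := by
    refine le_antisymm ?_ ?_
    · refine ciSup_le fun y => le_ciInf fun x => ?_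
      exact le_trans (ciInf_le (hbA y) x) (le_ciSup (hbB x) y)
    · refine le_trans (ciInf_le hbd ⟨x₀, hx₀A⟩) ?_
      exact ciSup_le fun y => hx₀ y y.2
  -- dual application
  have cont' : ContinuousOn (fun p : F × E => -J p.2 p.1) (B ×ˢ A) := by
    have h : ContinuousOn (fun p : F × E => J p.2 p.1) (B ×ˢ A) :=
      hJcont.comp continuous_swap.continuousOn fun p hp => ⟨hp.2, hp.1⟩
    exact h.neg
  obtain ⟨y₀, hy₀B, hy₀⟩ := fan_exists_x B A ⟨y₁, hy₁⟩ hBc hBconv ⟨x₁, hx₁⟩ hAc hAconv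
    (fun y x => -J x y) cont' (fun x hx => (hconc x hx).neg) (fun y hy => (hconv y hy).neg)
  have hc' : (⨆ x : A, ⨅ y : B, -J ↑x ↑y) ≤ -c := by
    refine ciSup_le fun x => ?_
    have hbneg : BddBelow (Set.range fun y : B => -J ↑x ↑y) :=
      ⟨-M, by rintro _ ⟨y, rfl⟩; show -M ≤ -J ↑x ↑y; exact neg_le_neg (le_of_abs_le (hM' x x.2 y y.2))⟩
    have h3 : ⨆ y : B, J ↑x ↑y ≤ -⨅ y : B, -J ↑x ↑y :=
      ciSup_le fun y => le_neg.mp (ciInf_le hbneg y)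
    have h4 : c ≤ ⨆ y : B, J ↑x ↑y := by
      rw [heq]
      exact ciInf_le hbd x
    exact le_neg.mp (le_trans h4 h3)
  have hy₀' : ∀ x ∈ A, c ≤ J x y₀ := by
    intro x hx
    have h5 : -J x y₀ ≤ ⨆ x : A, ⨅ y : B, -J ↑x ↑y := hy₀ x hx
    have := h5.trans hc'
    linarith
  have hJ00 : J x₀ y₀ = c :=
    le_antisymm (hx₀ y₀ hy₀B) (hy₀' x₀ hx₀A)
  refine ⟨heq, x₀, hx₀A, y₀, hy₀B, fun x hx y hy => ?_⟩
  exact ⟨(hx₀ y hy).trans hJ00.ge, hJ00.le.trans (hy₀' x hx)⟩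
end

section
/- Let A, B be nonempty compact sets in finite-dimensional normed spaces and J : A × B → ℝ continuous with sup_y inf_x J(x,y) = inf_x sup_y J(x,y). Then the set of saddle points V = {(x̄,ȳ) ∈ A × B : J(x̄,y) ≤ J(x̄,ȳ) ≤ J(x,ȳ) for all x ∈ A, y ∈ B} is a closed (hence compact) subset of A × B. -/
/-- The set of saddle points of a continuous function on a product of nonempty compact
sets (with `sup inf = inf sup`) is closed, hence compact. -/
theorem stmt_8 {E F : Type*}
    [NormedAddCommGroup E] [NormedSpace ℝ E] [FiniteDimensional ℝ E]
    [NormedAddCommGroup F] [NormedSpace ℝ F] [FiniteDimensional ℝ F]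
    (A : Set E) (B : Set F)
    (hAne : A.Nonempty) (hAc : IsCompact A)
    (hBne : B.Nonempty) (hBc : IsCompact B)
    (J : E → F → ℝ)
    (hJcont : ContinuousOn (fun p : E × F => J p.1 p.2) (A ×ˢ B))
    (hminimax : (⨆ y : B, ⨅ x : A, J x y) = (⨅ x : A, ⨆ y : B, J x y)) :
    IsClosed {p : E × F | p.1 ∈ A ∧ p.2 ∈ B ∧
        ∀ x ∈ A, ∀ y ∈ B, J p.1 y ≤ J p.1 p.2 ∧ J p.1 p.2 ≤ J x p.2} ∧
    IsCompact {p : E × F | p.1 ∈ A ∧ p.2 ∈ B ∧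
        ∀ x ∈ A, ∀ y ∈ B, J p.1 y ≤ J p.1 p.2 ∧ J p.1 p.2 ≤ J x p.2} := by
  set S : Set (E × F) := {p : E × F | p.1 ∈ A ∧ p.2 ∈ B ∧
      ∀ x ∈ A, ∀ y ∈ B, J p.1 y ≤ J p.1 p.2 ∧ J p.1 p.2 ≤ J x p.2} with hS
  have hKclosed : IsClosed (A ×ˢ B) := (hAc.prod hBc).isClosed
  -- S as an intersection of closed sets
  have hSeq : S = ⋂ x ∈ A, ⋂ y ∈ B,
      ((A ×ˢ B) ∩ {p : E × F | J p.1 y ≤ J p.1 p.2 ∧ J p.1 p.2 ≤ J x p.2}) := by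
    ext p
    simp only [hS, Set.mem_setOf_eq, Set.mem_iInter, Set.mem_inter_iff,
      Set.mem_prod, Set.mem_setOf_eq]
    constructor
    · rintro ⟨hA, hB, h⟩ x hx y hy
      exact ⟨⟨hA, hB⟩, h x hx y hy⟩
    · intro h
      obtain ⟨x₀, hx₀⟩ := hAne
      obtain ⟨y₀, hy₀⟩ := hBne
      obtain ⟨⟨hA, hB⟩, _⟩ := h x₀ hx₀ y₀ hy₀
      exact ⟨hA, hB, fun x hx y hy => (h x hx y hy).2⟩
  have hcl : IsClosed S := by
    rw [hSeq]
    refine isClosed_biInter (fun x hx => isClosed_biInter (fun y hy => ?_))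
    have m1 : Set.MapsTo (fun p : E × F => (p.1, y)) (A ×ˢ B) (A ×ˢ B) :=
      fun p hp => ⟨hp.1, hy⟩
    have h1 : ContinuousOn (fun p : E × F => J p.1 y) (A ×ˢ B) :=
      hJcont.comp (Continuous.continuousOn (by continuity)) m1
    have m3 : Set.MapsTo (fun p : E × F => (x, p.2)) (A ×ˢ B) (A ×ˢ B) :=
      fun p hp => ⟨hx, hp.2⟩
    have h3 : ContinuousOn (fun p : E × F => J x p.2) (A ×ˢ B) :=
      hJcont.comp (Continuous.continuousOn (by continuity)) m3
    have e1 : IsClosed ((A ×ˢ B) ∩ {p : E × F | J p.1 y ≤ J p.1 p.2}) := by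
      have := ContinuousOn.preimage_isClosed_of_isClosed
        (ContinuousOn.prodMk h1 hJcont) hKclosed
        (isClosed_le (continuous_fst) (continuous_snd) : IsClosed {q : ℝ × ℝ | q.1 ≤ q.2})
      exact this
    have e2 : IsClosed ((A ×ˢ B) ∩ {p : E × F | J p.1 p.2 ≤ J x p.2}) := by
      have := ContinuousOn.preimage_isClosed_of_isClosed
        (ContinuousOn.prodMk hJcont h3) hKclosed
        (isClosed_le (continuous_fst) (continuous_snd) : IsClosed {q : ℝ × ℝ | q.1 ≤ q.2})
      exact this
    have : (A ×ˢ B) ∩ {p : E × F | J p.1 y ≤ J p.1 p.2 ∧ J p.1 p.2 ≤ J x p.2}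
        = ((A ×ˢ B) ∩ {p : E × F | J p.1 y ≤ J p.1 p.2})
          ∩ ((A ×ˢ B) ∩ {p : E × F | J p.1 p.2 ≤ J x p.2}) := by
      ext p; simp [Set.mem_inter_iff]; tauto
    rw [this]
    exact e1.inter e2
  refine ⟨hcl, ?_⟩
  apply (hAc.prod hBc).of_isClosed_subset hcl
  intro p hp
  exact ⟨hp.1, hp.2.1⟩
end

section
/- Let A, B be nonempty compact sets in finite-dimensional normed spaces, and J_n : A × B → ℝ continuous with J_n → J₀ uniformly on A × B. Suppose (x_n, y_n) is a saddle point of J_n for each n ≥ 1 and (x_n, y_n) → (x₀, y₀). Then (x₀, y₀) is a saddle point of J₀. -/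
/-- If `J_n → J₀` uniformly on `A × B`, `(x_n, y_n)` is a saddle point of `J_n` and
`(x_n, y_n) → (x₀, y₀)`, then `(x₀, y₀)` is a saddle point of `J₀`. -/
theorem stmt_10 {E F : Type*}
    [NormedAddCommGroup E] [NormedSpace ℝ E] [FiniteDimensional ℝ E]
    [NormedAddCommGroup F] [NormedSpace ℝ F] [FiniteDimensional ℝ F]
    (A : Set E) (B : Set F)
    (hAne : A.Nonempty) (hAc : IsCompact A)
    (hBne : B.Nonempty) (hBc : IsCompact B)
    (J : ℕ → E → F → ℝ) (J₀ : E → F → ℝ)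
    (hJcont : ∀ n, ContinuousOn (fun p : E × F => J n p.1 p.2) (A ×ˢ B))
    (hJ₀cont : ContinuousOn (fun p : E × F => J₀ p.1 p.2) (A ×ˢ B))
    (hunif : TendstoUniformlyOn (fun n (p : E × F) => J n p.1 p.2)
      (fun p : E × F => J₀ p.1 p.2) Filter.atTop (A ×ˢ B))
    (xs : ℕ → E) (ys : ℕ → F)
    (hmem : ∀ n, xs n ∈ A ∧ ys n ∈ B)
    (hsaddle : ∀ n, ∀ x ∈ A, ∀ y ∈ B,
      J n (xs n) y ≤ J n (xs n) (ys n) ∧ J n (xs n) (ys n) ≤ J n x (ys n))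
    (x₀ : E) (y₀ : F)
    (hlim : Filter.Tendsto (fun n => (xs n, ys n)) Filter.atTop (nhds (x₀, y₀))) :
    x₀ ∈ A ∧ y₀ ∈ B ∧
      ∀ x ∈ A, ∀ y ∈ B, J₀ x₀ y ≤ J₀ x₀ y₀ ∧ J₀ x₀ y₀ ≤ J₀ x y₀ := by
  have hxlim : Filter.Tendsto xs Filter.atTop (nhds x₀) :=
    (continuous_fst.tendsto _).comp hlim
  have hylim : Filter.Tendsto ys Filter.atTop (nhds y₀) :=
    (continuous_snd.tendsto _).comp hlim
  have hxA : x₀ ∈ A := hAc.isClosed.mem_of_tendsto hxlim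
    (Filter.Eventually.of_forall fun n => (hmem n).1)
  have hyB : y₀ ∈ B := hBc.isClosed.mem_of_tendsto hylim
    (Filter.Eventually.of_forall fun n => (hmem n).2)
  refine ⟨hxA, hyB, fun x hx y hy => ?_⟩
  -- key: for a sequence g n ∈ A ×ˢ B tending to q ∈ A ×ˢ B, J n (g n) → J₀ q
  have key : ∀ (g : ℕ → E × F) (q : E × F), q ∈ A ×ˢ B → (∀ n, g n ∈ A ×ˢ B) →
      Filter.Tendsto g Filter.atTop (nhds q) →
      Filter.Tendsto (fun n => J n (g n).1 (g n).2) Filter.atTop (nhds (J₀ q.1 q.2)) := by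
    intro g q hq hgmem hg
    exact hunif.tendsto_comp (hJ₀cont q hq)
      (tendsto_nhdsWithin_of_tendsto_nhds_of_eventually_within _ hg
        (Filter.Eventually.of_forall hgmem))
  have h1 : Filter.Tendsto (fun n => J n (xs n) y) Filter.atTop (nhds (J₀ x₀ y)) :=
    key (fun n => (xs n, y)) (x₀, y) ⟨hxA, hy⟩ (fun n => ⟨(hmem n).1, hy⟩)
      (hxlim.prodMk_nhds tendsto_const_nhds)
  have h2 : Filter.Tendsto (fun n => J n (xs n) (ys n)) Filter.atTop (nhds (J₀ x₀ y₀)) :=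
    key (fun n => (xs n, ys n)) (x₀, y₀) ⟨hxA, hyB⟩ (fun n => ⟨(hmem n).1, (hmem n).2⟩) hlim
  have h3 : Filter.Tendsto (fun n => J n x (ys n)) Filter.atTop (nhds (J₀ x y₀)) :=
    key (fun n => (x, ys n)) (x, y₀) ⟨hx, hyB⟩ (fun n => ⟨hx, (hmem n).2⟩)
      (tendsto_const_nhds.prodMk_nhds hylim)
  exact ⟨le_of_tendsto_of_tendsto' h1 h2 fun n => (hsaddle n x hx y hy).1,
    le_of_tendsto_of_tendsto' h2 h3 fun n => (hsaddle n x hx y hy).2⟩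
end

section
/- Let A, B be nonempty compact sets in finite-dimensional normed spaces, J_n : A × B → ℝ continuous with J_n → J₀ uniformly, and suppose the saddle point set V_n of J_n is nonempty for each n ≥ 1. Then the upper limit limsup_n V_n (the set of accumulation points of sequences (p_n) with p_n ∈ V_n) is nonempty and contained in the saddle point set V₀ of J₀. -/
open Filter Topology


/-- If `J_n → J₀` uniformly on the product of compact sets `A × B` and each saddle point
set `V_n` is nonempty, then `limsup V_n` (the set of accumulation points of sequences
`p_n ∈ V_n`) is nonempty and contained in the saddle point set `V₀` of `J₀`. -/
theorem stmt_11 {E F : Type*}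
    [NormedAddCommGroup E] [NormedSpace ℝ E] [FiniteDimensional ℝ E]
    [NormedAddCommGroup F] [NormedSpace ℝ F] [FiniteDimensional ℝ F]
    (A : Set E) (B : Set F)
    (hAne : A.Nonempty) (hAc : IsCompact A)
    (hBne : B.Nonempty) (hBc : IsCompact B)
    (J : ℕ → E → F → ℝ) (J₀ : E → F → ℝ)
    (hJcont : ∀ n, ContinuousOn (fun p : E × F => J n p.1 p.2) (A ×ˢ B))
    (hJ₀cont : ContinuousOn (fun p : E × F => J₀ p.1 p.2) (A ×ˢ B))
    (hunif : TendstoUniformlyOn (fun n (p : E × F) => J n p.1 p.2)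
      (fun p : E × F => J₀ p.1 p.2) Filter.atTop (A ×ˢ B))
    (V : ℕ → Set (E × F))
    (hV : ∀ n, V n = {p : E × F | p.1 ∈ A ∧ p.2 ∈ B ∧
      ∀ x ∈ A, ∀ y ∈ B, J n p.1 y ≤ J n p.1 p.2 ∧ J n p.1 p.2 ≤ J n x p.2})
    (hVne : ∀ n, (V n).Nonempty)
    (V₀ : Set (E × F))
    (hV₀ : V₀ = {p : E × F | p.1 ∈ A ∧ p.2 ∈ B ∧
      ∀ x ∈ A, ∀ y ∈ B, J₀ p.1 y ≤ J₀ p.1 p.2 ∧ J₀ p.1 p.2 ≤ J₀ x p.2})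
    (L : Set (E × F))
    (hL : L = {p : E × F | ∃ a : ℕ → E × F, (∀ n, a n ∈ V n) ∧
      MapClusterPt p Filter.atTop a}) :
    L.Nonempty ∧ L ⊆ V₀ := by
  have hABc : IsCompact (A ×ˢ B) := hAc.prod hBc
  choose a ha using hVne
  have hmem : ∀ n, a n ∈ A ×ˢ B := by
    intro n
    have h := ha n
    rw [hV n] at h
    exact ⟨h.1, h.2.1⟩
  obtain ⟨q, hq, φ, hφ, hφt⟩ := hABc.tendsto_subseq hmem
  have hLne : L.Nonempty := by
    refine ⟨q, ?_⟩
    rw [hL]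
    exact ⟨a, ha, .of_comp hφ.tendsto_atTop hφt.mapClusterPt⟩
  refine ⟨hLne, ?_⟩
  intro p hp
  rw [hL] at hp
  obtain ⟨b, hb, hcl⟩ := hp
  obtain ⟨ψ, hψ, hψt⟩ := TopologicalSpace.FirstCountableTopology.tendsto_subseq hcl
  have hbmem : ∀ n, b n ∈ A ×ˢ B := by
    intro n
    have h := hb n
    rw [hV n] at h
    exact ⟨h.1, h.2.1⟩
  have hpAB : p ∈ A ×ˢ B :=
    hABc.isClosed.mem_of_tendsto hψt (Filter.Eventually.of_forall fun k => hbmem (ψ k))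
  have hunif' : TendstoUniformlyOn (fun k (q : E × F) => J (ψ k) q.1 q.2)
      (fun q : E × F => J₀ q.1 q.2) Filter.atTop (A ×ˢ B) :=
    fun u hu => hψ.tendsto_atTop.eventually (hunif u hu)
  have h1t : Tendsto (fun k => ((b (ψ k)).1 : E)) Filter.atTop (𝓝 p.1) :=
    (continuous_fst.tendsto p).comp hψt
  have h2t : Tendsto (fun k => ((b (ψ k)).2 : F)) Filter.atTop (𝓝 p.2) :=
    (continuous_snd.tendsto p).comp hψt
  rw [hV₀]
  refine ⟨hpAB.1, hpAB.2, fun x hx y hy => ?_⟩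
  have t2 : Tendsto (fun k => J (ψ k) (b (ψ k)).1 (b (ψ k)).2) Filter.atTop
      (𝓝 (J₀ p.1 p.2)) := by
    refine hunif'.tendsto_comp (hJ₀cont.continuousWithinAt hpAB) ?_
    exact tendsto_nhdsWithin_of_tendsto_nhds_of_eventually_within _ hψt
      (Filter.Eventually.of_forall fun k => hbmem (ψ k))
  have t1 : Tendsto (fun k => J (ψ k) (b (ψ k)).1 y) Filter.atTop (𝓝 (J₀ p.1 y)) := by
    refine hunif'.tendsto_comp (hJ₀cont.continuousWithinAt (show ((p.1, y) : E × F) ∈ A ×ˢ B from ⟨hpAB.1, hy⟩))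
      (tendsto_nhdsWithin_of_tendsto_nhds_of_eventually_within
        (fun k => ((b (ψ k)).1, y)) (h1t.prodMk_nhds tendsto_const_nhds)
        (Filter.Eventually.of_forall fun k => ⟨(hbmem (ψ k)).1, hy⟩))
  have t3 : Tendsto (fun k => J (ψ k) x (b (ψ k)).2) Filter.atTop (𝓝 (J₀ x p.2)) := by
    refine hunif'.tendsto_comp (hJ₀cont.continuousWithinAt (show ((x, p.2) : E × F) ∈ A ×ˢ B from ⟨hx, hpAB.2⟩))
      (tendsto_nhdsWithin_of_tendsto_nhds_of_eventually_within
        (fun k => (x, (b (ψ k)).2)) (tendsto_const_nhds.prodMk_nhds h2t)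
        (Filter.Eventually.of_forall fun k => ⟨hx, (hbmem (ψ k)).2⟩))
  have hineq : ∀ k, J (ψ k) (b (ψ k)).1 y ≤ J (ψ k) (b (ψ k)).1 (b (ψ k)).2 ∧
      J (ψ k) (b (ψ k)).1 (b (ψ k)).2 ≤ J (ψ k) x (b (ψ k)).2 := by
    intro k
    have h := hb (ψ k)
    rw [hV (ψ k)] at h
    exact h.2.2 x hx y hy
  exact ⟨le_of_tendsto_of_tendsto' t1 t2 fun k => (hineq k).1,
    le_of_tendsto_of_tendsto' t2 t3 fun k => (hineq k).2⟩
end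

section
/- Let T ≥ 1, D > 0, H = {x : {0,...,T+1} → ℝ : x(0)=x(T+1)=0} with norm ‖x‖ = (∑_{k=1}^{T+1}|Δx(k−1)|²)^{1/2}, and c₂ the discrete Poincaré constant. Let F : {1,...,T} × ℝ × ℝ × [−D,D] → ℝ be continuous and suppose: (H2) for each y ∈ H there exist β₁ ∈ ℝ, γ₁ : {1,...,T} → ℝ and α₁ < 1/(2c₂) with F(k,s,y(k),u) ≥ −α₁ s² + β₁ s + γ₁(k) for all s ∈ ℝ, |u| ≤ D, k; (H3) the symmetric upper bound F(k,x(k),t,u) ≤ α₂ t² + β₂ t + γ₂(k) with α₂ < 1/(2c₂); (H4) x ↦ J_u(x,y) is convex; (H5) y ↦ J_u(x,y) is concave, where J_u(x,y) = ∑_{k=1}^{T+1}(|Δx(k−1)|²/2 − |Δy(k−1)|²/2) + ∑_{k=1}^T F(k,x(k),y(k),u(k)). Then for each parameter u : {1,...,T} → [−D,D] the functional J_u has at least one saddle point (x_u,y_u) ∈ H × H, and the set of all saddle points of J_u is compact. -/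
variable {E : Type*} [AddCommGroup E] [Module ℝ E] [TopologicalSpace E]
  [IsTopologicalAddGroup E] [ContinuousSMul ℝ E]

/-- Komiya's segment lemma. -/
lemma komiya_two {X Y : Set E} (hXc : IsCompact X) (hYconv : Convex ℝ Y)
    {f : E → E → ℝ} (hf : Continuous fun p : E × E => f p.1 p.2)
    (hcvx : ∀ y ∈ Y, ConvexOn ℝ X fun x => f x y)
    (hccv : ∀ x ∈ X, ConcaveOn ℝ Y fun y => f x y)
    {y₁ y₂ : E} (hy₁ : y₁ ∈ Y) (hy₂ : y₂ ∈ Y) {α β : ℝ} (hβ : β < α)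
    (h : ∀ x ∈ X, α < max (f x y₁) (f x y₂)) :
    ∃ y₀ ∈ Y, ∀ x ∈ X, β < f x y₀ := by
  by_contra hcon
  push_neg at hcon
  -- the segment
  set z : ℝ → E := fun t => (1 - t) • y₁ + t • y₂ with hz
  have hz0 : z 0 = y₁ := by simp [hz]
  have hz1 : z 1 = y₂ := by simp [hz]
  have hzY : ∀ t ∈ Set.Icc (0:ℝ) 1, z t ∈ Y := fun t ht =>
    hYconv hy₁ hy₂ (by linarith [ht.2]) ht.1 (by ring)
  have hzcont : Continuous z := by continuity
  -- sublevel sets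
  set C : ℝ → Set E := fun t => {x ∈ X | f x (z t) ≤ α} with hC
  have hfx : ∀ y : E, Continuous fun x => f x y := fun y =>
    hf.comp (continuous_id.prodMk continuous_const)
  have hfy : ∀ x : E, Continuous fun y => f x y := fun x =>
    hf.comp (continuous_const.prodMk continuous_id)
  have hCne : ∀ t ∈ Set.Icc (0:ℝ) 1, ∃ x ∈ X, f x (z t) ≤ β := by
    intro t ht
    obtain ⟨x, hx, hfx⟩ := hcon (z t) (hzY t ht)
    exact ⟨x, hx, hfx⟩
  have hCconv : ∀ t, t ∈ Set.Icc (0:ℝ) 1 → Convex ℝ (C t) := by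
    intro t ht
    exact (hcvx (z t) (hzY t ht)).convex_le α
  -- disjointness of the endpoint sublevel sets
  have hdisj : ∀ x ∈ X, ¬(f x y₁ ≤ α ∧ f x y₂ ≤ α) := by
    intro x hx ⟨h1, h2⟩
    have := h x hx
    rcases max_cases (f x y₁) (f x y₂) with ⟨he, _⟩ | ⟨he, _⟩ <;> rw [he] at this <;> linarith
  have hC01 : ∀ x, x ∈ C 0 → x ∈ C 1 → False := by
    intro x h0 h1
    rw [hC] at h0 h1
    simp only [Set.mem_setOf_eq, hz0] at h0
    simp only [Set.mem_setOf_eq, hz1] at h1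
    exact hdisj x h0.1 ⟨h0.2, h1.2⟩
  -- concavity along the segment
  have hkey : ∀ x ∈ X, ∀ t ∈ Set.Icc (0:ℝ) 1, min (f x y₁) (f x y₂) ≤ f x (z t) := by
    intro x hx t ht
    have := (hccv x hx).2 hy₁ hy₂ (sub_nonneg.2 ht.2) ht.1 (by ring)
    calc min (f x y₁) (f x y₂)
        = (1 - t) * min (f x y₁) (f x y₂) + t * min (f x y₁) (f x y₂) := by ring
      _ ≤ (1 - t) * f x y₁ + t * f x y₂ := by
          gcongr
          · linarith [ht.2]
          · exact min_le_left _ _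
          · exact ht.1
          · exact min_le_right _ _
      _ ≤ f x (z t) := by simpa [smul_eq_mul] using this
  -- dichotomy
  have hdich : ∀ t ∈ Set.Icc (0:ℝ) 1, C t ⊆ C 0 ∨ C t ⊆ C 1 := by
    intro t ht
    set U₁ : Set E := {x | α < f x y₂} with hU₁
    set U₂ : Set E := {x | α < f x y₁} with hU₂
    have hU₁o : IsOpen U₁ := isOpen_lt continuous_const (hfx y₂)
    have hU₂o : IsOpen U₂ := isOpen_lt continuous_const (hfx y₁)
    have hsub : C t ⊆ U₁ ∪ U₂ := by
      intro x hxC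
      obtain ⟨hxX, hxf⟩ := hxC
      have hmin := hkey x hxX t ht
      rcases min_cases (f x y₁) (f x y₂) with ⟨he, _⟩ | ⟨he, _⟩ <;> rw [he] at hmin
      · -- f x y₁ ≤ α, so α < f x y₂
        have h1 : f x y₁ ≤ α := le_trans hmin hxf
        have := h x hxX
        have h2 : α < f x y₂ := by
          rcases max_cases (f x y₁) (f x y₂) with ⟨hm, _⟩ | ⟨hm, _⟩ <;> rw [hm] at this
          · exact absurd this (not_lt.2 h1)
          · exact this
        exact Or.inl h2
      · have h2 : f x y₂ ≤ α := le_trans hmin hxf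
        have := h x hxX
        have h1 : α < f x y₁ := by
          rcases max_cases (f x y₁) (f x y₂) with ⟨hm, _⟩ | ⟨hm, _⟩ <;> rw [hm] at this
          · exact this
          · exact absurd this (not_lt.2 h2)
        exact Or.inr h1
    have hempty : C t ∩ (U₁ ∩ U₂) = ∅ := by
      apply Set.eq_empty_iff_forall_notMem.2
      rintro x ⟨⟨hxX, hxf⟩, hU1, hU2⟩
      have hU1' : α < f x y₂ := hU1
      have hU2' : α < f x y₁ := hU2
      have hmin := hkey x hxX t ht
      have : α < min (f x y₁) (f x y₂) := lt_min hU2' hU1'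
      linarith
    have hpre : IsPreconnected (C t) := (hCconv t ht).isPreconnected
    by_contra hcontra
    push_neg at hcontra
    obtain ⟨hn0, hn1⟩ := hcontra
    -- C t meets both U₂ᶜ-part... derive nonempty intersections
    have hmeet₁ : (C t ∩ U₁).Nonempty := by
      obtain ⟨x, hxC, hxn⟩ := Set.not_subset.1 hn1
      have := hsub hxC
      rcases this with hx1 | hx2
      · exact ⟨x, hxC, hx1⟩
      · -- x ∈ U₂ : α < f x y₁, so x ∉ C 0... but we need C t ∩ U₁
        exfalso
        apply hxn
        obtain ⟨hxX, hxf⟩ := hxC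
        refine ⟨hxX, ?_⟩
        rw [hz1]
        -- f x y₂ ≤ α? from hkey: min ≤ f x (z t) ≤ α and α < f x y₁
        have hmin := hkey x hxX t ht
        have hx2' : α < f x y₁ := hx2
        rcases min_cases (f x y₁) (f x y₂) with ⟨he, _⟩ | ⟨he, _⟩ <;> rw [he] at hmin
        · linarith
        · linarith
    have hmeet₂ : (C t ∩ U₂).Nonempty := by
      obtain ⟨x, hxC, hxn⟩ := Set.not_subset.1 hn0
      have := hsub hxC
      rcases this with hx1 | hx2
      · exfalso
        apply hxn
        obtain ⟨hxX, hxf⟩ := hxC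
        refine ⟨hxX, ?_⟩
        rw [hz0]
        have hmin := hkey x hxX t ht
        have hx1' : α < f x y₂ := hx1
        rcases min_cases (f x y₁) (f x y₂) with ⟨he, _⟩ | ⟨he, _⟩ <;> rw [he] at hmin
        · linarith
        · linarith
      · exact ⟨x, hxC, hx2⟩
    obtain ⟨x, hx⟩ := hpre U₁ U₂ hU₁o hU₂o hsub hmeet₁ hmeet₂
    rw [hempty] at hx
    exact hx
  -- the partition of [0,1]
  set P₁ : Set ℝ := {t ∈ Set.Icc (0:ℝ) 1 | C t ⊆ C 0} with hP₁
  set P₂ : Set ℝ := {t ∈ Set.Icc (0:ℝ) 1 | C t ⊆ C 1} with hP₂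
  have hCne' : ∀ t ∈ Set.Icc (0:ℝ) 1, (C t).Nonempty := by
    intro t ht
    obtain ⟨x, hx, hfx⟩ := hCne t ht
    exact ⟨x, hx, le_trans hfx hβ.le⟩
  have hPdisj : ∀ t, ¬(t ∈ P₁ ∧ t ∈ P₂) := by
    rintro t ⟨⟨ht, h1⟩, ⟨_, h2⟩⟩
    obtain ⟨x, hx⟩ := hCne' t ht
    exact hC01 x (h1 hx) (h2 hx)
  have hclosegen : ∀ i j : ℝ, i ∈ Set.Icc (0:ℝ) 1 → j ∈ Set.Icc (0:ℝ) 1 →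
      (∀ t ∈ Set.Icc (0:ℝ) 1, C t ⊆ C i ∨ C t ⊆ C j) →
      (∀ x, x ∈ C i → x ∈ C j → False) →
      IsClosed {t ∈ Set.Icc (0:ℝ) 1 | C t ⊆ C i} := by
    intro i j hi hj hdi hdisjij
    apply IsSeqClosed.isClosed
    intro tn t htn htlim
    have htIcc : t ∈ Set.Icc (0:ℝ) 1 :=
      isClosed_Icc.isSeqClosed (fun n => (htn n).1) htlim
    obtain ⟨x₀, hx₀X, hx₀f⟩ := hCne t htIcc
    have hx₀Ct : x₀ ∈ C t := ⟨hx₀X, le_trans hx₀f hβ.le⟩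
    have hcontt : Filter.Tendsto (fun n => f x₀ (z (tn n))) Filter.atTop
        (nhds (f x₀ (z t))) := (((hfy x₀).comp hzcont).tendsto t).comp htlim
    have hev : ∀ᶠ n in Filter.atTop, f x₀ (z (tn n)) < α :=
      hcontt.eventually_lt_const (lt_of_le_of_lt hx₀f hβ)
    obtain ⟨n, hn⟩ := hev.exists
    have hx₀Ci : x₀ ∈ C i := (htn n).2 ⟨hx₀X, hn.le⟩
    refine ⟨htIcc, ?_⟩
    rcases hdi t htIcc with hsub | hsub
    · exact hsub
    · exact absurd (hdisjij x₀ hx₀Ci (hsub hx₀Ct)) (fun h => h)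
  have h0Icc : (0:ℝ) ∈ Set.Icc (0:ℝ) 1 := by norm_num
  have h1Icc : (1:ℝ) ∈ Set.Icc (0:ℝ) 1 := by norm_num
  have hP₁closed : IsClosed P₁ := hclosegen 0 1 h0Icc h1Icc hdich hC01
  have hP₂closed : IsClosed P₂ :=
    hclosegen 1 0 h1Icc h0Icc (fun t ht => (hdich t ht).symm) (fun x h1 h0 => hC01 x h0 h1)
  -- connectedness contradiction
  have hcover : Set.Icc (0:ℝ) 1 ⊆ P₂ᶜ ∪ P₁ᶜ := by
    intro t _
    by_cases h1 : t ∈ P₁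
    · exact Or.inl (fun h2 => hPdisj t ⟨h1, h2⟩)
    · exact Or.inr h1
  have h0P₁ : (0:ℝ) ∈ P₁ := ⟨h0Icc, fun x hx => hx⟩
  have h1P₂ : (1:ℝ) ∈ P₂ := ⟨h1Icc, fun x hx => hx⟩
  have hne₁ : (Set.Icc (0:ℝ) 1 ∩ P₂ᶜ).Nonempty :=
    ⟨0, h0Icc, fun h2 => hPdisj 0 ⟨h0P₁, h2⟩⟩
  have hne₂ : (Set.Icc (0:ℝ) 1 ∩ P₁ᶜ).Nonempty :=
    ⟨1, h1Icc, fun h1 => hPdisj 1 ⟨h1, h1P₂⟩⟩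
  obtain ⟨t, htIcc, ht2, ht1⟩ := isPreconnected_Icc P₂ᶜ P₁ᶜ hP₂closed.isOpen_compl
    hP₁closed.isOpen_compl hcover hne₁ hne₂
  rcases hdich t htIcc with hsub | hsub
  · exact ht1 ⟨htIcc, hsub⟩
  · exact ht2 ⟨htIcc, hsub⟩

/-- Komiya's finite lemma, by induction. -/
lemma komiya_fin {Y : Set E} (hYconv : Convex ℝ Y)
    {f : E → E → ℝ} (hf : Continuous fun p : E × E => f p.1 p.2) :
    ∀ (n : ℕ) (X : Set E), IsCompact X → Convex ℝ X →
    (∀ y ∈ Y, ConvexOn ℝ X fun x => f x y) →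
    (∀ x ∈ X, ConcaveOn ℝ Y fun y => f x y) →
    ∀ (ys : Fin n → E), (∀ i, ys i ∈ Y) → Y.Nonempty →
    ∀ α β : ℝ, β < α → (∀ x ∈ X, ∃ i, α < f x (ys i)) →
    ∃ y₀ ∈ Y, ∀ x ∈ X, β < f x y₀ := by
  intro n
  induction n with
  | zero =>
    intro X _ _ _ _ ys _ hYne α β _ hyp
    obtain ⟨y₀, hy₀⟩ := hYne
    refine ⟨y₀, hy₀, fun x hx => ?_⟩
    obtain ⟨i, _⟩ := hyp x hx
    exact absurd i.2 (by omega)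
  | succ n ih =>
    intro X hXc hXconv hcvx hccv ys hys hYne α β hβ hyp
    set yn := ys (Fin.last n) with hyn
    set β' := β + (α - β) / 3 with hβ'
    set β'' := β + 2 * (α - β) / 3 with hβ''
    have hββ' : β < β' := by rw [hβ']; linarith
    have hβ'β'' : β' < β'' := by rw [hβ', hβ'']; linarith
    have hβ''α : β'' < α := by rw [hβ'']; linarith
    set X' := {x ∈ X | f x yn ≤ β'} with hX'
    have hfxc : ∀ y : E, Continuous fun x => f x y := fun y =>
      hf.comp (continuous_id.prodMk continuous_const)
    have hX'c : IsCompact X' := by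
      have : X' = X ∩ {x | f x yn ≤ β'} := by
        ext x; simp [hX', Set.mem_setOf_eq, Set.mem_inter_iff]
      rw [this]
      exact hXc.inter_right (isClosed_le (hfxc yn) continuous_const)
    have hX'conv : Convex ℝ X' := (hcvx yn (hys _)).convex_le β'
    have hX'X : X' ⊆ X := fun x hx => hx.1
    obtain ⟨y', hy'Y, hy'⟩ := ih X' hX'c hX'conv
      (fun y hy => (hcvx y hy).subset hX'X hX'conv)
      (fun x hx => hccv x (hX'X hx))
      (fun i => ys i.castSucc) (fun i => hys _) hYne α β'' hβ''α
      (by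
        intro x hx
        obtain ⟨i, hi⟩ := hyp x (hX'X hx)
        rcases Fin.eq_castSucc_or_eq_last i with ⟨j, hj⟩ | hj
        · refine ⟨j, ?_⟩
          show α < f x (ys j.castSucc)
          rwa [hj] at hi
        · rw [hj] at hi
          exact absurd hi (not_lt.2 (hx.2.trans (le_of_lt (lt_trans hβ'β'' hβ''α))))
        )
    exact komiya_two hXc hYconv hf hcvx hccv hy'Y (hys (Fin.last n)) hββ'
      (by
        intro x hx
        by_cases hcase : f x yn ≤ β'
        · have := hy' x ⟨hx, hcase⟩
          exact lt_max_of_lt_left (lt_trans hβ'β'' this)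
        · exact lt_max_of_lt_right (lt_of_not_ge hcase))

/-- Komiya's lemma with compactness: infinite family version (Sion core). -/
lemma komiya_inf {X Y : Set E} (hXc : IsCompact X) (hXconv : Convex ℝ X)
    (hYconv : Convex ℝ Y) (hYne : Y.Nonempty)
    {f : E → E → ℝ} (hf : Continuous fun p : E × E => f p.1 p.2)
    (hcvx : ∀ y ∈ Y, ConvexOn ℝ X fun x => f x y)
    (hccv : ∀ x ∈ X, ConcaveOn ℝ Y fun y => f x y)
    {α β : ℝ} (hβ : β < α) (hyp : ∀ x ∈ X, ∃ y ∈ Y, α < f x y) :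
    ∃ y₀ ∈ Y, ∀ x ∈ X, β < f x y₀ := by
  have hfxc : ∀ y : E, Continuous fun x => f x y := fun y =>
    hf.comp (continuous_id.prodMk continuous_const)
  set U : Y → Set E := fun y => {x | α < f x (y : E)} with hU
  have hUo : ∀ y : Y, IsOpen (U y) := fun y => isOpen_lt continuous_const (hfxc y)
  have hcover : X ⊆ ⋃ y : Y, U y := by
    intro x hx
    obtain ⟨y, hyY, hy⟩ := hyp x hx
    exact Set.mem_iUnion.2 ⟨⟨y, hyY⟩, hy⟩
  obtain ⟨t, ht⟩ := hXc.elim_finite_subcover U hUo hcover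
  rcases t.eq_empty_or_nonempty with rfl | htne
  · obtain ⟨y₀, hy₀⟩ := hYne
    refine ⟨y₀, hy₀, fun x hx => ?_⟩
    have := ht hx
    simp at this
  · set e := t.equivFin with he
    refine komiya_fin hYconv hf t.card X hXc hXconv hcvx hccv
      (fun i => ((e.symm i : Y) : E)) (fun i => (e.symm i : Y).2) hYne α β hβ ?_
    intro x hx
    have := ht hx
    simp only [Set.mem_iUnion] at this
    obtain ⟨y, hyt, hy⟩ := this
    exact ⟨e ⟨y, hyt⟩, by simpa [Equiv.symm_apply_apply, hU] using hy⟩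

/-- Existence of a saddle point on a compact convex set (via Sion/Komiya). -/
lemma saddle_compact [T2Space E] {B : Set E} (hBc : IsCompact B) (hBconv : Convex ℝ B)
    (hBne : B.Nonempty)
    {f : E → E → ℝ} (hf : Continuous fun p : E × E => f p.1 p.2)
    (hcvx : ∀ y ∈ B, ConvexOn ℝ B fun x => f x y)
    (hccv : ∀ x ∈ B, ConcaveOn ℝ B fun y => f x y) :
    ∃ xb ∈ B, ∃ yb ∈ B, (∀ y ∈ B, f xb y ≤ f xb yb) ∧ ∀ x ∈ B, f xb yb ≤ f x yb := by
  have hfxc : ∀ y : E, Continuous fun x => f x y := fun y =>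
    hf.comp (continuous_id.prodMk continuous_const)
  have hfyc : ∀ x : E, Continuous fun y => f x y := fun x =>
    hf.comp (continuous_const.prodMk continuous_id)
  -- the sup function Φ
  set Φ : E → ℝ := fun x => sSup (f x '' B) with hΦ
  have himg : ∀ x, IsCompact (f x '' B) := fun x => hBc.image (hfyc x)
  have himgne : ∀ x, (f x '' B).Nonempty := fun x => hBne.image _
  have hΦmem : ∀ x, ∃ y ∈ B, f x y = Φ x := by
    intro x
    have := (himg x).sSup_mem (himgne x)
    obtain ⟨y, hyB, hy⟩ := this
    exact ⟨y, hyB, hy⟩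
  have hΦle : ∀ x, ∀ y ∈ B, f x y ≤ Φ x := fun x y hy =>
    le_csSup (himg x).bddAbove (Set.mem_image_of_mem _ hy)
  -- the infimum of Φ over B
  have hΦbdd : BddBelow (Φ '' B) := by
    obtain ⟨y₀, hy₀⟩ := hBne
    obtain ⟨b, hb⟩ := (hBc.image (hfxc y₀)).bddBelow
    refine ⟨b, ?_⟩
    rintro v ⟨x, hxB, rfl⟩
    exact le_trans (hb (Set.mem_image_of_mem _ hxB)) (hΦle x y₀ hy₀)
  set v : ℝ := sInf (Φ '' B) with hv
  have hvle : ∀ x ∈ B, v ≤ Φ x := fun x hx => csInf_le hΦbdd (Set.mem_image_of_mem _ hx)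
  -- minimizer of Φ
  have hZx : ∀ n : ℕ, ∃ x ∈ B, Φ x < v + 1 / (n + 1) := by
    intro n
    have h1 : v < v + 1 / (n + 1 : ℝ) := by
      have : (0:ℝ) < 1 / (n + 1) := by positivity
      linarith
    obtain ⟨w, hw, hwlt⟩ := exists_lt_of_csInf_lt ((hBne.image Φ)) h1
    obtain ⟨x, hxB, rfl⟩ := hw
    exact ⟨x, hxB, hwlt⟩
  have hBclosed : IsClosed B := hBc.isClosed
  set Z : ℕ → Set E := fun n => {x ∈ B | ∀ y ∈ B, f x y ≤ v + 1 / (n + 1)} with hZ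
  have hZclosed : ∀ n, IsClosed (Z n) := by
    intro n
    have : Z n = B ∩ ⋂ y ∈ B, {x | f x y ≤ v + 1 / (n + 1)} := by
      ext x
      simp only [hZ, Set.mem_setOf_eq, Set.mem_inter_iff, Set.mem_iInter]
      try tauto
    rw [this]
    exact hBclosed.inter (isClosed_biInter fun y _ => isClosed_le (hfxc y) continuous_const)
  have hZne : ∀ n, (Z n).Nonempty := by
    intro n
    obtain ⟨x, hxB, hxlt⟩ := hZx n
    exact ⟨x, hxB, fun y hy => le_trans (hΦle x y hy) hxlt.le⟩
  have hZsub : ∀ n, Z (n + 1) ⊆ Z n := by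
    intro n x hx
    refine ⟨hx.1, fun y hy => le_trans (hx.2 y hy) ?_⟩
    have hn1 : (0:ℝ) < (n:ℝ) + 1 := by positivity
    have : (1:ℝ) / (n + 1 + 1) ≤ 1 / (n + 1) := one_div_le_one_div_of_le hn1 (by linarith)
    push_cast
    push_cast at hx ⊢
    linarith
  obtain ⟨xb, hxb⟩ := IsCompact.nonempty_iInter_of_sequence_nonempty_isCompact_isClosed
    Z hZsub hZne (hBc.of_isClosed_subset (hZclosed 0) (fun x hx => hx.1)) hZclosed
  simp only [Set.mem_iInter] at hxb
  have hxbB : xb ∈ B := (hxb 0).1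
  have hxble : ∀ y ∈ B, f xb y ≤ v := by
    intro y hy
    by_contra hlt
    push_neg at hlt
    obtain ⟨n, hn⟩ := exists_nat_one_div_lt (sub_pos.2 hlt)
    have := (hxb n).2 y hy
    rw [lt_sub_iff_add_lt] at hn
    linarith [hn]
  -- the maximizer side via Komiya
  have hZ'ne : ∀ n : ℕ, ∃ y ∈ B, ∀ x ∈ B, v - 1 / (n + 1) ≤ f x y := by
    intro n
    have h1 : v - 1 / (n + 1 : ℝ) < v - 1 / (2 * (n + 1)) := by
      have hn1 : (0:ℝ) < (n:ℝ) + 1 := by positivity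
      have h2 : (1:ℝ) / (2 * (n + 1)) < 1 / (n + 1) :=
        one_div_lt_one_div_of_lt hn1 (by linarith)
      linarith
    obtain ⟨y₀, hy₀B, hy₀⟩ := komiya_inf hBc hBconv hBconv hBne hf hcvx hccv h1
      (by
        intro x hx
        obtain ⟨y, hyB, hyeq⟩ := hΦmem x
        refine ⟨y, hyB, ?_⟩
        rw [hyeq]
        have := hvle x hx
        have h3 : (0:ℝ) < 1 / (2 * ((n:ℝ) + 1)) := by positivity
        linarith)
    exact ⟨y₀, hy₀B, fun x hx => (hy₀ x hx).le⟩
  set Z' : ℕ → Set E := fun n => {y ∈ B | ∀ x ∈ B, v - 1 / (n + 1) ≤ f x y} with hZ'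
  have hZ'closed : ∀ n, IsClosed (Z' n) := by
    intro n
    have : Z' n = B ∩ ⋂ x ∈ B, {y | v - 1 / (n + 1) ≤ f x y} := by
      ext y
      simp only [hZ', Set.mem_setOf_eq, Set.mem_inter_iff, Set.mem_iInter]
      try tauto
    rw [this]
    exact hBclosed.inter (isClosed_biInter fun x _ => isClosed_le continuous_const (hfyc x))
  have hZ'nonempty : ∀ n, (Z' n).Nonempty := by
    intro n
    obtain ⟨y, hyB, hy⟩ := hZ'ne n
    exact ⟨y, hyB, hy⟩
  have hZ'sub : ∀ n, Z' (n + 1) ⊆ Z' n := by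
    intro n y hy
    refine ⟨hy.1, fun x hx => le_trans ?_ (hy.2 x hx)⟩
    have hn1 : (0:ℝ) < (n:ℝ) + 1 := by positivity
    have : (1:ℝ) / (n + 1 + 1) ≤ 1 / (n + 1) := one_div_le_one_div_of_le hn1 (by linarith)
    push_cast
    push_cast at hx ⊢
    linarith
  obtain ⟨yb, hyb⟩ := IsCompact.nonempty_iInter_of_sequence_nonempty_isCompact_isClosed
    Z' hZ'sub hZ'nonempty (hBc.of_isClosed_subset (hZ'closed 0) (fun y hy => hy.1)) hZ'closed
  simp only [Set.mem_iInter] at hyb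
  have hybB : yb ∈ B := (hyb 0).1
  have hybge : ∀ x ∈ B, v ≤ f x yb := by
    intro x hx
    by_contra hlt
    push_neg at hlt
    obtain ⟨n, hn⟩ := exists_nat_one_div_lt (sub_pos.2 hlt)
    have := (hyb n).2 x hx
    linarith [hn]
  have heq : f xb yb = v := le_antisymm (hxble yb hybB) (hybge xb hxbB)
  exact ⟨xb, hxbB, yb, hybB, fun y hy => heq ▸ hxble y hy, fun x hx => heq ▸ hybge x hx⟩

set_option maxHeartbeats 2000000 in
/-- Existence of saddle points for `J_u` under H1–H5, and compactness of the set of all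
saddle points, for each parameter `u` with `‖u‖_C ≤ D`. -/
theorem stmt_14 (T : ℕ) (hT : 1 ≤ T) (D : ℝ) (hD : 0 < D)
    (S : Set (ℕ → ℝ))
    (hS : S = {x : ℕ → ℝ | x 0 = 0 ∧ ∀ k, T + 1 ≤ k → x k = 0})
    (c₂ : ℝ) (hc₂pos : 0 < c₂)
    (hc₂ : ∀ x ∈ S, ∑ k ∈ Finset.Icc 1 T, (x k) ^ 2 ≤
      c₂ * ∑ k ∈ Finset.Icc 1 (T + 1), (x k - x (k - 1)) ^ 2)
    (F : ℕ → ℝ → ℝ → ℝ → ℝ)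
    -- H1 (continuity of F in all variables):
    (hF : ∀ k, Continuous (fun p : ℝ × ℝ × ℝ => F k p.1 p.2.1 p.2.2))
    (J : (ℕ → ℝ) → (ℕ → ℝ) → (ℕ → ℝ) → ℝ)
    (hJ : ∀ u x y, J u x y =
      (∑ k ∈ Finset.Icc 1 (T + 1),
        ((x k - x (k - 1)) ^ 2 / 2 - (y k - y (k - 1)) ^ 2 / 2)) +
      ∑ k ∈ Finset.Icc 1 T, F k (x k) (y k) (u k))
    -- H2:
    (H2 : ∀ y ∈ S, ∃ α₁ β₁ : ℝ, ∃ γ₁ : ℕ → ℝ, α₁ < 1 / (2 * c₂) ∧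
      ∀ k ∈ Finset.Icc 1 T, ∀ s u : ℝ, |u| ≤ D →
        -α₁ * s ^ 2 + β₁ * s + γ₁ k ≤ F k s (y k) u)
    -- H3:
    (H3 : ∀ x ∈ S, ∃ α₂ β₂ : ℝ, ∃ γ₂ : ℕ → ℝ, α₂ < 1 / (2 * c₂) ∧
      ∀ k ∈ Finset.Icc 1 T, ∀ t u : ℝ, |u| ≤ D →
        F k (x k) t u ≤ α₂ * t ^ 2 + β₂ * t + γ₂ k)
    -- H4:
    (H4 : ∀ u : ℕ → ℝ, (∀ k, |u k| ≤ D) → ∀ y ∈ S, ConvexOn ℝ S (fun x => J u x y))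
    -- H5:
    (H5 : ∀ u : ℕ → ℝ, (∀ k, |u k| ≤ D) → ∀ x ∈ S, ConcaveOn ℝ S (fun y => J u x y)) :
    ∀ u : ℕ → ℝ, (∀ k, |u k| ≤ D) →
      (∃ xu ∈ S, ∃ yu ∈ S, ∀ x ∈ S, ∀ y ∈ S,
        J u xu y ≤ J u xu yu ∧ J u xu yu ≤ J u x yu) ∧
      IsCompact {p : (ℕ → ℝ) × (ℕ → ℝ) | p.1 ∈ S ∧ p.2 ∈ S ∧
        ∀ x ∈ S, ∀ y ∈ S, J u p.1 y ≤ J u p.1 p.2 ∧ J u p.1 p.2 ≤ J u x p.2} := by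
  intro u hu
  -- basic facts about S
  have h0S : (0 : ℕ → ℝ) ∈ S := by rw [hS]; exact ⟨rfl, fun k _ => rfl⟩
  have hSconv : Convex ℝ S := by
    rw [hS]
    intro x hx y hy a b ha hb hab
    refine ⟨?_, fun k hk => ?_⟩
    · simp [hx.1, hy.1]
    · simp [hx.2 k hk, hy.2 k hk]
  have hSclosed : IsClosed S := by
    rw [hS]
    have heq : {x : ℕ → ℝ | x 0 = 0 ∧ ∀ k, T + 1 ≤ k → x k = 0} =
        {x : ℕ → ℝ | x 0 = 0} ∩ ⋂ k : ℕ, {x : ℕ → ℝ | T + 1 ≤ k → x k = 0} := by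
      ext x; simp [Set.mem_iInter]
    rw [heq]
    refine (isClosed_eq (continuous_apply 0) continuous_const).inter (isClosed_iInter fun k => ?_)
    by_cases hk : T + 1 ≤ k
    · simp only [hk, forall_true_left]
      exact isClosed_eq (continuous_apply k) continuous_const
    · simp only [hk, false_implies]
      exact isClosed_univ
  have hSzero : ∀ x ∈ S, ∀ k, k ∉ Finset.Icc 1 T → x k = 0 := by
    intro x hx k hk
    rw [hS] at hx
    rw [Finset.mem_Icc] at hk
    push_neg at hk
    by_cases h1 : 1 ≤ k
    · exact hx.2 k (by omega)
    · have : k = 0 := by omega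
      rw [this]; exact hx.1
  -- continuity of J u
  have hcont : Continuous fun p : (ℕ → ℝ) × (ℕ → ℝ) => J u p.1 p.2 := by
    have heq : (fun p : (ℕ → ℝ) × (ℕ → ℝ) => J u p.1 p.2) = fun p =>
        (∑ k ∈ Finset.Icc 1 (T + 1),
          ((p.1 k - p.1 (k - 1)) ^ 2 / 2 - (p.2 k - p.2 (k - 1)) ^ 2 / 2)) +
        ∑ k ∈ Finset.Icc 1 T, F k (p.1 k) (p.2 k) (u k) :=
      funext fun p => hJ u p.1 p.2
    rw [heq]
    apply Continuous.add
    · apply continuous_finset_sum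
      intro k _
      have h1 : Continuous fun p : (ℕ → ℝ) × (ℕ → ℝ) => p.1 k :=
        (continuous_apply k).comp continuous_fst
      have h2 : Continuous fun p : (ℕ → ℝ) × (ℕ → ℝ) => p.1 (k - 1) :=
        (continuous_apply (k - 1)).comp continuous_fst
      have h3 : Continuous fun p : (ℕ → ℝ) × (ℕ → ℝ) => p.2 k :=
        (continuous_apply k).comp continuous_snd
      have h4 : Continuous fun p : (ℕ → ℝ) × (ℕ → ℝ) => p.2 (k - 1) :=
        (continuous_apply (k - 1)).comp continuous_snd
      exact (((h1.sub h2).pow 2).div_const 2).sub (((h3.sub h4).pow 2).div_const 2)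
    · apply continuous_finset_sum
      intro k _
      have hg : Continuous fun p : (ℕ → ℝ) × (ℕ → ℝ) => ((p.1 k, (p.2 k, u k)) : ℝ × ℝ × ℝ) := by
        refine Continuous.prodMk ?_ (Continuous.prodMk ?_ continuous_const)
        · exact (continuous_apply k).comp continuous_fst
        · exact (continuous_apply k).comp continuous_snd
      exact (hF k).comp hg
  -- a rewriting of J with the zero function
  have hQnonneg : ∀ z : ℕ → ℝ, (0:ℝ) ≤ ∑ k ∈ Finset.Icc 1 T, z k ^ 2 :=
    fun z => Finset.sum_nonneg fun k _ => sq_nonneg _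
  -- coercivity from below in x (at y = 0)
  have hA : ∃ δ C : ℝ, 0 < δ ∧ ∀ x ∈ S,
      δ * (∑ k ∈ Finset.Icc 1 T, x k ^ 2) - C ≤ J u x 0 := by
    obtain ⟨α₁, β₁, γ₁, hα₁, hH2⟩ := H2 0 h0S
    set ε := 1 / (2 * c₂) - α₁ with hε
    have hεpos : 0 < ε := by rw [hε]; linarith
    refine ⟨ε / 2, T * (β₁ ^ 2 / (2 * ε)) - ∑ k ∈ Finset.Icc 1 T, γ₁ k, by positivity, ?_⟩
    intro x hx
    have hterm : ∀ k ∈ Finset.Icc 1 T,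
        -(α₁ + ε / 2) * x k ^ 2 - β₁ ^ 2 / (2 * ε) + γ₁ k ≤ F k (x k) ((0:ℕ → ℝ) k) (u k) := by
      intro k hk
      refine le_trans ?_ (hH2 k hk (x k) (u k) (hu k))
      have hne : (2:ℝ) * ε ≠ 0 := ne_of_gt (by linarith)
      have h2 : ε / 2 * x k ^ 2 + β₁ * x k + β₁ ^ 2 / (2 * ε) =
          (ε * x k + β₁) ^ 2 / (2 * ε) := by
        field_simp
        ring
      have key : 0 ≤ ε / 2 * x k ^ 2 + β₁ * x k + β₁ ^ 2 / (2 * ε) := by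
        rw [h2]
        exact div_nonneg (sq_nonneg _) (by linarith)
      linarith
    have hsum := Finset.sum_le_sum hterm
    have hlhs : ∑ k ∈ Finset.Icc 1 T, (-(α₁ + ε / 2) * x k ^ 2 - β₁ ^ 2 / (2 * ε) + γ₁ k) =
        -(α₁ + ε / 2) * (∑ k ∈ Finset.Icc 1 T, x k ^ 2) - T * (β₁ ^ 2 / (2 * ε))
          + ∑ k ∈ Finset.Icc 1 T, γ₁ k := by
      rw [Finset.sum_add_distrib, Finset.sum_sub_distrib, ← Finset.mul_sum, Finset.sum_const,
        Nat.card_Icc, nsmul_eq_mul]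
      norm_num
    rw [hlhs] at hsum
    have hJx := hJ u x 0
    have hzero : ∀ k, ((0:ℕ → ℝ)) k = (0:ℝ) := fun k => rfl
    have hfirst : ∑ k ∈ Finset.Icc 1 (T + 1),
        ((x k - x (k - 1)) ^ 2 / 2 - ((0:ℕ → ℝ) k - (0:ℕ → ℝ) (k - 1)) ^ 2 / 2) =
        (∑ k ∈ Finset.Icc 1 (T + 1), (x k - x (k - 1)) ^ 2) / 2 := by
      rw [Finset.sum_div]
      congr 1
      ext k
      simp
    rw [hfirst] at hJx
    have hq := hc₂ x hx
    have hdsq : (∑ k ∈ Finset.Icc 1 T, x k ^ 2) / c₂ ≤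
        ∑ k ∈ Finset.Icc 1 (T + 1), (x k - x (k - 1)) ^ 2 := by
      rw [div_le_iff₀ hc₂pos]
      linarith [hq]
    have h2c : 1 / (2 * c₂) * (∑ k ∈ Finset.Icc 1 T, x k ^ 2) =
        (∑ k ∈ Finset.Icc 1 T, x k ^ 2) / c₂ / 2 := by
      rw [div_div, mul_comm c₂ 2, one_div, inv_mul_eq_div]
    rw [hJx]
    have hεQ : ε / 2 * (∑ k ∈ Finset.Icc 1 T, x k ^ 2) =
        1 / (2 * c₂) * (∑ k ∈ Finset.Icc 1 T, x k ^ 2)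
        - (α₁ + ε / 2) * (∑ k ∈ Finset.Icc 1 T, x k ^ 2) := by
      rw [hε]; ring
    rw [hεQ, h2c]
    linarith [hdsq, hsum]
  -- coercivity from above in y (at x = 0)
  have hB : ∃ δ C : ℝ, 0 < δ ∧ ∀ y ∈ S,
      J u 0 y ≤ C - δ * (∑ k ∈ Finset.Icc 1 T, y k ^ 2) := by
    obtain ⟨α₂, β₂, γ₂, hα₂, hH3⟩ := H3 0 h0S
    set ε := 1 / (2 * c₂) - α₂ with hε
    have hεpos : 0 < ε := by rw [hε]; linarith
    refine ⟨ε / 2, T * (β₂ ^ 2 / (2 * ε)) + ∑ k ∈ Finset.Icc 1 T, γ₂ k, by positivity, ?_⟩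
    intro y hy
    have hterm : ∀ k ∈ Finset.Icc 1 T,
        F k ((0:ℕ → ℝ) k) (y k) (u k) ≤ (α₂ + ε / 2) * y k ^ 2 + β₂ ^ 2 / (2 * ε) + γ₂ k := by
      intro k hk
      refine le_trans (hH3 k hk (y k) (u k) (hu k)) ?_
      have hne : (2:ℝ) * ε ≠ 0 := ne_of_gt (by linarith)
      have h2 : ε / 2 * y k ^ 2 - β₂ * y k + β₂ ^ 2 / (2 * ε) =
          (ε * y k - β₂) ^ 2 / (2 * ε) := by
        field_simp
        ring
      have key : 0 ≤ ε / 2 * y k ^ 2 - β₂ * y k + β₂ ^ 2 / (2 * ε) := by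
        rw [h2]
        exact div_nonneg (sq_nonneg _) (by linarith)
      linarith
    have hsum := Finset.sum_le_sum hterm
    have hlhs : ∑ k ∈ Finset.Icc 1 T, ((α₂ + ε / 2) * y k ^ 2 + β₂ ^ 2 / (2 * ε) + γ₂ k) =
        (α₂ + ε / 2) * (∑ k ∈ Finset.Icc 1 T, y k ^ 2) + T * (β₂ ^ 2 / (2 * ε))
          + ∑ k ∈ Finset.Icc 1 T, γ₂ k := by
      rw [Finset.sum_add_distrib, Finset.sum_add_distrib, ← Finset.mul_sum, Finset.sum_const,
        Nat.card_Icc, nsmul_eq_mul]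
      norm_num
    rw [hlhs] at hsum
    have hJy := hJ u 0 y
    have hfirst : ∑ k ∈ Finset.Icc 1 (T + 1),
        (((0:ℕ → ℝ) k - (0:ℕ → ℝ) (k - 1)) ^ 2 / 2 - (y k - y (k - 1)) ^ 2 / 2) =
        -((∑ k ∈ Finset.Icc 1 (T + 1), (y k - y (k - 1)) ^ 2) / 2) := by
      rw [Finset.sum_div, ← Finset.sum_neg_distrib]
      apply Finset.sum_congr rfl
      intro k _
      simp
    rw [hfirst] at hJy
    have hq := hc₂ y hy
    have hdsq : (∑ k ∈ Finset.Icc 1 T, y k ^ 2) / c₂ ≤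
        ∑ k ∈ Finset.Icc 1 (T + 1), (y k - y (k - 1)) ^ 2 := by
      rw [div_le_iff₀ hc₂pos]
      linarith [hq]
    have h2c : 1 / (2 * c₂) * (∑ k ∈ Finset.Icc 1 T, y k ^ 2) =
        (∑ k ∈ Finset.Icc 1 T, y k ^ 2) / c₂ / 2 := by
      rw [div_div, mul_comm c₂ 2, one_div, inv_mul_eq_div]
    rw [hJy]
    have hεQ : ε / 2 * (∑ k ∈ Finset.Icc 1 T, y k ^ 2) =
        1 / (2 * c₂) * (∑ k ∈ Finset.Icc 1 T, y k ^ 2)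
        - (α₂ + ε / 2) * (∑ k ∈ Finset.Icc 1 T, y k ^ 2) := by
      rw [hε]; ring
    have hfin := hsum
    rw [hεQ, h2c]
    linarith [hdsq, hfin]
  obtain ⟨δ₁, C₁, hδ₁, hA⟩ := hA
  obtain ⟨δ₂, C₂, hδ₂, hB⟩ := hB
  set δm := min δ₁ δ₂ with hδm
  have hδmpos : 0 < δm := lt_min hδ₁ hδ₂
  set K : ℝ := max (C₁ + C₂) 0 with hK
  have hKnonneg : 0 ≤ K := le_max_right _ _
  set r₀ : ℝ := Real.sqrt (K / δm) with hr₀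
  have hr₀nonneg : 0 ≤ r₀ := Real.sqrt_nonneg _
  have hr₀sq : r₀ ^ 2 = K / δm := Real.sq_sqrt (by positivity)
  -- key bound: whenever J u x 0 ≤ J u 0 y, all coordinates of x and y are ≤ r₀
  have hbound : ∀ x ∈ S, ∀ y ∈ S, J u x 0 ≤ J u 0 y →
      (∀ k, |x k| ≤ r₀) ∧ (∀ k, |y k| ≤ r₀) := by
    intro x hx y hy hxy
    have h1 := hA x hx
    have h2 := hB y hy
    have hQx : δ₁ * (∑ k ∈ Finset.Icc 1 T, x k ^ 2) ≤ K := by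
      have := hQnonneg y
      nlinarith [hδ₂, le_max_left (C₁ + C₂) (0:ℝ)]
    have hQy : δ₂ * (∑ k ∈ Finset.Icc 1 T, y k ^ 2) ≤ K := by
      have := hQnonneg x
      nlinarith [hδ₁, le_max_left (C₁ + C₂) (0:ℝ)]
    have hQx' : (∑ k ∈ Finset.Icc 1 T, x k ^ 2) ≤ r₀ ^ 2 := by
      rw [hr₀sq]
      rw [le_div_iff₀ hδmpos]
      nlinarith [hQnonneg x, min_le_left δ₁ δ₂]
    have hQy' : (∑ k ∈ Finset.Icc 1 T, y k ^ 2) ≤ r₀ ^ 2 := by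
      rw [hr₀sq]
      rw [le_div_iff₀ hδmpos]
      nlinarith [hQnonneg y, min_le_right δ₁ δ₂]
    have hcoord : ∀ z : ℕ → ℝ, z ∈ S → (∑ k ∈ Finset.Icc 1 T, z k ^ 2) ≤ r₀ ^ 2 →
        ∀ k, |z k| ≤ r₀ := by
      intro z hz hQ k
      by_cases hk : k ∈ Finset.Icc 1 T
      · have h3 : z k ^ 2 ≤ ∑ j ∈ Finset.Icc 1 T, z j ^ 2 :=
          Finset.single_le_sum (fun j _ => sq_nonneg (z j)) hk
        have h4 : z k ^ 2 ≤ r₀ ^ 2 := le_trans h3 hQ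
        have h5 := Real.sqrt_le_sqrt h4
        rwa [Real.sqrt_sq_eq_abs, Real.sqrt_sq hr₀nonneg] at h5
      · rw [hSzero z hz k hk]
        simpa using hr₀nonneg
    exact ⟨hcoord x hx hQx', hcoord y hy hQy'⟩
  -- the compact convex box
  set R : ℝ := r₀ + 1 with hR
  set B : Set (ℕ → ℝ) := {x ∈ S | ∀ k, |x k| ≤ R} with hBdef
  have hRpos : 0 < R := by rw [hR]; linarith
  have hBS : B ⊆ S := fun x hx => hx.1
  have h0B : (0 : ℕ → ℝ) ∈ B := ⟨h0S, fun k => by simpa using hRpos.le⟩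
  have hBne : B.Nonempty := ⟨0, h0B⟩
  have hBconv : Convex ℝ B := by
    intro x hx y hy a b ha hb hab
    refine ⟨hSconv hx.1 hy.1 ha hb hab, fun k => ?_⟩
    have : |(a • x + b • y) k| = |a * x k + b * y k| := by simp
    rw [this]
    calc |a * x k + b * y k| ≤ |a * x k| + |b * y k| := abs_add_le _ _
      _ = a * |x k| + b * |y k| := by rw [abs_mul, abs_mul, abs_of_nonneg ha, abs_of_nonneg hb]
      _ ≤ a * R + b * R := by gcongr; exacts [hx.2 k, hy.2 k]
      _ = R := by rw [← add_mul, hab, one_mul]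
  have hBclosed : IsClosed B := by
    have : B = S ∩ ⋂ k : ℕ, {x : ℕ → ℝ | |x k| ≤ R} := by
      ext x
      simp [hBdef, Set.mem_iInter]
    rw [this]
    exact hSclosed.inter (isClosed_iInter fun k =>
      isClosed_le ((continuous_apply k).abs) continuous_const)
  have hBcomp : IsCompact B := by
    refine IsCompact.of_isClosed_subset
      (isCompact_univ_pi fun _ : ℕ => isCompact_Icc (a := -R) (b := R)) hBclosed ?_
    intro x hx k _
    exact abs_le.1 (hx.2 k)
  -- saddle point on B
  obtain ⟨xb, hxbB, yb, hybB, hsad1, hsad2⟩ := saddle_compact hBcomp hBconv hBne hcont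
    (fun y hy => (H4 u hu y (hBS hy)).subset hBS hBconv)
    (fun x hx => (H5 u hu x (hBS hx)).subset hBS hBconv)
  have hxbS : xb ∈ S := hBS hxbB
  have hybS : yb ∈ S := hBS hybB
  -- uniform bounds on the saddle point
  have hxy0 : J u xb 0 ≤ J u 0 yb := le_trans (hsad1 0 h0B) (hsad2 0 h0B)
  obtain ⟨hxbr, hybr⟩ := hbound xb hxbS yb hybS hxy0
  -- extension of the saddle inequalities to all of S
  have hglobal2 : ∀ x ∈ S, J u xb yb ≤ J u x yb := by
    intro x hx
    set m : ℝ := ∑ k ∈ Finset.Icc 1 T, |x k| with hm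
    have hm0 : 0 ≤ m := Finset.sum_nonneg fun k _ => abs_nonneg _
    set t : ℝ := 1 / (1 + m) with ht
    have htpos : 0 < t := by rw [ht]; positivity
    have ht1 : t ≤ 1 := by
      rw [ht]
      rw [div_le_one (by linarith)]
      linarith
    set w : ℕ → ℝ := (1 - t) • xb + t • x with hw
    have hwS : w ∈ S := hSconv hxbS hx (by linarith) htpos.le (by ring)
    have hwB : w ∈ B := by
      refine ⟨hwS, fun k => ?_⟩
      have hwk : w k = (1 - t) * xb k + t * x k := by simp [hw]
      by_cases hk : k ∈ Finset.Icc 1 T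
      · have hxk : |x k| ≤ m :=
          Finset.single_le_sum (f := fun j => |x j|) (fun j _ => abs_nonneg _) hk
        have htm : t * m ≤ 1 := by
          rw [ht, div_mul_eq_mul_div, div_le_one (by linarith)]
          linarith
        calc |w k| = |(1 - t) * xb k + t * x k| := by rw [hwk]
          _ ≤ |(1 - t) * xb k| + |t * x k| := abs_add_le _ _
          _ = (1 - t) * |xb k| + t * |x k| := by
              rw [abs_mul, abs_mul, abs_of_nonneg (by linarith), abs_of_nonneg htpos.le]
          _ ≤ (1 - t) * r₀ + t * m := by
              have h1 : (0:ℝ) ≤ 1 - t := by linarith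
              exact add_le_add (mul_le_mul_of_nonneg_left (hxbr k) h1)
                (mul_le_mul_of_nonneg_left hxk htpos.le)
          _ ≤ r₀ + 1 := by nlinarith [hr₀nonneg]
          _ = R := hR.symm
      · rw [hSzero w hwS k hk]
        simpa using hRpos.le
    have hconv := (H4 u hu yb hybS).2 hxbS hx (by linarith : (0:ℝ) ≤ 1 - t) htpos.le (by ring)
    have hJw : J u w yb ≤ (1 - t) * J u xb yb + t * J u x yb := by
      simpa [hw, smul_eq_mul] using hconv
    have hlow : J u xb yb ≤ J u w yb := hsad2 w hwB
    have htineq : t * J u xb yb ≤ t * J u x yb := by nlinarith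
    exact le_of_mul_le_mul_left htineq htpos
  have hglobal1 : ∀ y ∈ S, J u xb y ≤ J u xb yb := by
    intro y hy
    set m : ℝ := ∑ k ∈ Finset.Icc 1 T, |y k| with hm
    have hm0 : 0 ≤ m := Finset.sum_nonneg fun k _ => abs_nonneg _
    set t : ℝ := 1 / (1 + m) with ht
    have htpos : 0 < t := by rw [ht]; positivity
    have ht1 : t ≤ 1 := by
      rw [ht]
      rw [div_le_one (by linarith)]
      linarith
    set w : ℕ → ℝ := (1 - t) • yb + t • y with hw
    have hwS : w ∈ S := hSconv hybS hy (by linarith) htpos.le (by ring)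
    have hwB : w ∈ B := by
      refine ⟨hwS, fun k => ?_⟩
      have hwk : w k = (1 - t) * yb k + t * y k := by simp [hw]
      by_cases hk : k ∈ Finset.Icc 1 T
      · have hyk : |y k| ≤ m :=
          Finset.single_le_sum (f := fun j => |y j|) (fun j _ => abs_nonneg _) hk
        have htm : t * m ≤ 1 := by
          rw [ht, div_mul_eq_mul_div, div_le_one (by linarith)]
          linarith
        calc |w k| = |(1 - t) * yb k + t * y k| := by rw [hwk]
          _ ≤ |(1 - t) * yb k| + |t * y k| := abs_add_le _ _
          _ = (1 - t) * |yb k| + t * |y k| := by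
              rw [abs_mul, abs_mul, abs_of_nonneg (by linarith), abs_of_nonneg htpos.le]
          _ ≤ (1 - t) * r₀ + t * m := by
              have h1 : (0:ℝ) ≤ 1 - t := by linarith
              exact add_le_add (mul_le_mul_of_nonneg_left (hybr k) h1)
                (mul_le_mul_of_nonneg_left hyk htpos.le)
          _ ≤ r₀ + 1 := by nlinarith [hr₀nonneg]
          _ = R := hR.symm
      · rw [hSzero w hwS k hk]
        simpa using hRpos.le
    have hconc := (H5 u hu xb hxbS).2 hybS hy (by linarith : (0:ℝ) ≤ 1 - t) htpos.le (by ring)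
    have hJw : (1 - t) * J u xb yb + t * J u xb y ≤ J u xb w := by
      simpa [hw, smul_eq_mul] using hconc
    have hup : J u xb w ≤ J u xb yb := hsad1 w hwB
    have htineq : t * J u xb y ≤ t * J u xb yb := by nlinarith
    exact le_of_mul_le_mul_left htineq htpos
  constructor
  · exact ⟨xb, hxbS, yb, hybS, fun x hx y hy => ⟨hglobal1 y hy, hglobal2 x hx⟩⟩
  -- compactness of the saddle set
  · set P : Set ((ℕ → ℝ) × (ℕ → ℝ)) := {p | p.1 ∈ S ∧ p.2 ∈ S ∧
      ∀ x ∈ S, ∀ y ∈ S, J u p.1 y ≤ J u p.1 p.2 ∧ J u p.1 p.2 ≤ J u x p.2} with hP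
    have hPclosed : IsClosed P := by
      have hrepr : P = (Prod.fst ⁻¹' S) ∩ (Prod.snd ⁻¹' S) ∩
          ⋂ x ∈ S, ⋂ y ∈ S, ({p : (ℕ → ℝ) × (ℕ → ℝ) | J u p.1 y ≤ J u p.1 p.2} ∩
            {p : (ℕ → ℝ) × (ℕ → ℝ) | J u p.1 p.2 ≤ J u x p.2}) := by
        ext p
        simp only [hP, Set.mem_setOf_eq, Set.mem_inter_iff, Set.mem_preimage, Set.mem_iInter]
        tauto
      rw [hrepr]
      have hc1 : ∀ y : ℕ → ℝ, Continuous fun p : (ℕ → ℝ) × (ℕ → ℝ) => J u p.1 y :=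
        fun y => hcont.comp (continuous_fst.prodMk continuous_const)
      have hc2 : ∀ x : ℕ → ℝ, Continuous fun p : (ℕ → ℝ) × (ℕ → ℝ) => J u x p.2 :=
        fun x => hcont.comp (continuous_const.prodMk continuous_snd)
      refine ((hSclosed.preimage continuous_fst).inter
        (hSclosed.preimage continuous_snd)).inter ?_
      refine isClosed_biInter fun x hx => isClosed_biInter fun y hy => ?_
      exact (isClosed_le (hc1 y) hcont).inter (isClosed_le hcont (hc2 x))
    have hPsub : P ⊆ (Set.pi Set.univ fun _ : ℕ => Set.Icc (-r₀) r₀) ×ˢ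
        (Set.pi Set.univ fun _ : ℕ => Set.Icc (-r₀) r₀) := by
      rintro ⟨x, y⟩ ⟨hxS, hyS, hsp⟩
      have h1 := (hsp 0 h0S 0 h0S).1
      have h2 := (hsp 0 h0S 0 h0S).2
      obtain ⟨hxr, hyr⟩ := hbound x hxS y hyS (le_trans h1 h2)
      exact ⟨fun k _ => abs_le.1 (hxr k), fun k _ => abs_le.1 (hyr k)⟩
    exact IsCompact.of_isClosed_subset
      ((isCompact_univ_pi fun _ : ℕ => isCompact_Icc).prod
        (isCompact_univ_pi fun _ : ℕ => isCompact_Icc)) hPclosed hPsub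
end

section
/- Under the hypotheses of the saddle point existence theorem (H1–H5 of the paper), there exist radii r₁, r₂ > 0, independent of which saddle point is chosen (for fixed u), such that every saddle point (x_u, y_u) of J_u satisfies ‖x_u‖ ≤ r₁ and ‖y_u‖ ≤ r₂. -/
set_option maxHeartbeats 1000000

/-- Young-type inequality: `-(δ s² ) - b²/(4δ) ≤ b s` for `δ > 0`. -/
lemma young_aux (δ b s : ℝ) (hδ : 0 < δ) : -(δ * s ^ 2) - b ^ 2 / (4 * δ) ≤ b * s := by
  have h4 : (0:ℝ) < 4 * δ := by linarith
  have h : -(δ * s ^ 2) - b * s ≤ b ^ 2 / (4 * δ) := by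
    rw [le_div_iff₀ h4]
    nlinarith [sq_nonneg (2 * δ * s + b)]
  linarith

/-- Under H1–H5 all saddle points of `J_u` lie in a fixed product of balls `B₁ × B₂`:
there are radii `r₁, r₂ > 0` bounding the norms of every saddle point. -/
theorem stmt_15 (T : ℕ) (hT : 1 ≤ T) (D : ℝ) (hD : 0 < D)
    (S : Set (ℕ → ℝ))
    (hS : S = {x : ℕ → ℝ | x 0 = 0 ∧ ∀ k, T + 1 ≤ k → x k = 0})
    (c₂ : ℝ) (hc₂pos : 0 < c₂)
    (hc₂ : ∀ x ∈ S, ∑ k ∈ Finset.Icc 1 T, (x k) ^ 2 ≤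
      c₂ * ∑ k ∈ Finset.Icc 1 (T + 1), (x k - x (k - 1)) ^ 2)
    (F : ℕ → ℝ → ℝ → ℝ → ℝ)
    -- H1 (continuity of F in all variables):
    (hF : ∀ k, Continuous (fun p : ℝ × ℝ × ℝ => F k p.1 p.2.1 p.2.2))
    (J : (ℕ → ℝ) → (ℕ → ℝ) → (ℕ → ℝ) → ℝ)
    (hJ : ∀ u x y, J u x y =
      (∑ k ∈ Finset.Icc 1 (T + 1),
        ((x k - x (k - 1)) ^ 2 / 2 - (y k - y (k - 1)) ^ 2 / 2)) +
      ∑ k ∈ Finset.Icc 1 T, F k (x k) (y k) (u k))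
    -- H2:
    (H2 : ∀ y ∈ S, ∃ α₁ β₁ : ℝ, ∃ γ₁ : ℕ → ℝ, α₁ < 1 / (2 * c₂) ∧
      ∀ k ∈ Finset.Icc 1 T, ∀ s u : ℝ, |u| ≤ D →
        -α₁ * s ^ 2 + β₁ * s + γ₁ k ≤ F k s (y k) u)
    -- H3:
    (H3 : ∀ x ∈ S, ∃ α₂ β₂ : ℝ, ∃ γ₂ : ℕ → ℝ, α₂ < 1 / (2 * c₂) ∧
      ∀ k ∈ Finset.Icc 1 T, ∀ t u : ℝ, |u| ≤ D →
        F k (x k) t u ≤ α₂ * t ^ 2 + β₂ * t + γ₂ k)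
    -- H4:
    (H4 : ∀ u : ℕ → ℝ, (∀ k, |u k| ≤ D) → ∀ y ∈ S, ConvexOn ℝ S (fun x => J u x y))
    -- H5:
    (H5 : ∀ u : ℕ → ℝ, (∀ k, |u k| ≤ D) → ∀ x ∈ S, ConcaveOn ℝ S (fun y => J u x y)) :
    ∀ u : ℕ → ℝ, (∀ k, |u k| ≤ D) →
      ∃ r₁ > (0 : ℝ), ∃ r₂ > (0 : ℝ), ∀ xu ∈ S, ∀ yu ∈ S,
        (∀ x ∈ S, ∀ y ∈ S, J u xu y ≤ J u xu yu ∧ J u xu yu ≤ J u x yu) →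
          Real.sqrt (∑ k ∈ Finset.Icc 1 (T + 1), (xu k - xu (k - 1)) ^ 2) ≤ r₁ ∧
          Real.sqrt (∑ k ∈ Finset.Icc 1 (T + 1), (yu k - yu (k - 1)) ^ 2) ≤ r₂ := by
  intro u hu
  -- the zero function lies in S
  have hz : (fun _ : ℕ => (0:ℝ)) ∈ S := by
    rw [hS]; exact ⟨rfl, fun k _ => rfl⟩
  obtain ⟨α₁, β₁, γ₁, hα₁, hF1⟩ := H2 _ hz
  obtain ⟨α₂, β₂, γ₂, hα₂, hF2⟩ := H3 _ hz
  have hc2inv : 0 < 1 / (2 * c₂) := by positivity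
  set a₁ := max α₁ 0 with ha₁def
  set a₂ := max α₂ 0 with ha₂def
  have ha₁nn : 0 ≤ a₁ := le_max_right _ _
  have ha₂nn : 0 ≤ a₂ := le_max_right _ _
  have ha₁lt : a₁ < 1 / (2 * c₂) := max_lt hα₁ hc2inv
  have ha₂lt : a₂ < 1 / (2 * c₂) := max_lt hα₂ hc2inv
  set δ₁ := (1 / (2 * c₂) - a₁) / 2 with hδ₁def
  set δ₂ := (1 / (2 * c₂) - a₂) / 2 with hδ₂def
  have hδ₁ : 0 < δ₁ := by rw [hδ₁def]; linarith
  have hδ₂ : 0 < δ₂ := by rw [hδ₂def]; linarith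
  set ε₁ := 1 / 2 - (a₁ + δ₁) * c₂ with hε₁def
  set ε₂ := 1 / 2 - (a₂ + δ₂) * c₂ with hε₂def
  have hlt₁ : a₁ + δ₁ < 1 / (2 * c₂) := by rw [hδ₁def]; linarith
  have hlt₂ : a₂ + δ₂ < 1 / (2 * c₂) := by rw [hδ₂def]; linarith
  have hhalf : (1 / (2 * c₂)) * c₂ = 1 / 2 := by field_simp
  have hε₁pos : 0 < ε₁ := by
    have := mul_lt_mul_of_pos_right hlt₁ hc₂pos
    rw [hhalf] at this; rw [hε₁def]; linarith
  have hε₂pos : 0 < ε₂ := by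
    have := mul_lt_mul_of_pos_right hlt₂ hc₂pos
    rw [hhalf] at this; rw [hε₂def]; linarith
  set C₁ := ∑ k ∈ Finset.Icc 1 T, (γ₁ k - β₁ ^ 2 / (4 * δ₁)) with hC₁def
  set C₂ := ∑ k ∈ Finset.Icc 1 T, (γ₂ k + β₂ ^ 2 / (4 * δ₂)) with hC₂def
  refine ⟨max 1 (Real.sqrt ((C₂ - C₁) / ε₁)), lt_of_lt_of_le one_pos (le_max_left _ _),
    max 1 (Real.sqrt ((C₂ - C₁) / ε₂)), lt_of_lt_of_le one_pos (le_max_left _ _),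
    fun xu hxu yu hyu hsaddle => ?_⟩
  set Qx := ∑ k ∈ Finset.Icc 1 (T + 1), (xu k - xu (k - 1)) ^ 2 with hQxdef
  set Qy := ∑ k ∈ Finset.Icc 1 (T + 1), (yu k - yu (k - 1)) ^ 2 with hQydef
  have hQxnn : 0 ≤ Qx := Finset.sum_nonneg fun k _ => sq_nonneg _
  have hQynn : 0 ≤ Qy := Finset.sum_nonneg fun k _ => sq_nonneg _
  have hsx : ∑ k ∈ Finset.Icc 1 T, (xu k) ^ 2 ≤ c₂ * Qx := hc₂ xu hxu
  have hsy : ∑ k ∈ Finset.Icc 1 T, (yu k) ^ 2 ≤ c₂ * Qy := hc₂ yu hyu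
  -- lower bound for J u xu 0
  have hlow : ε₁ * Qx + C₁ ≤ J u xu (fun _ => 0) := by
    rw [hJ]
    have h1 : ∑ k ∈ Finset.Icc 1 (T + 1),
        ((xu k - xu (k - 1)) ^ 2 / 2 - (((fun _ => (0:ℝ)) k - (fun _ => (0:ℝ)) (k - 1)) ^ 2 / 2))
        = Qx / 2 := by
      rw [hQxdef, Finset.sum_div]
      exact Finset.sum_congr rfl fun k _ => by norm_num
    have h2 : ∑ k ∈ Finset.Icc 1 T, (-(a₁ + δ₁) * (xu k) ^ 2 + (γ₁ k - β₁ ^ 2 / (4 * δ₁)))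
        ≤ ∑ k ∈ Finset.Icc 1 T, F k (xu k) ((fun _ => (0:ℝ)) k) (u k) := by
      refine Finset.sum_le_sum fun k hk => ?_
      have hb := hF1 k hk (xu k) (u k) (hu k)
      have hy := young_aux δ₁ β₁ (xu k) hδ₁
      have h1' : α₁ ≤ a₁ := le_max_left _ _
      nlinarith [mul_nonneg (sub_nonneg.mpr h1') (sq_nonneg (xu k))]
    have h3 : ∑ k ∈ Finset.Icc 1 T, (-(a₁ + δ₁) * (xu k) ^ 2 + (γ₁ k - β₁ ^ 2 / (4 * δ₁)))
        = -(a₁ + δ₁) * (∑ k ∈ Finset.Icc 1 T, (xu k) ^ 2) + C₁ := by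
      rw [Finset.sum_add_distrib, ← Finset.mul_sum, hC₁def]
    rw [h1]
    rw [h3] at h2
    have hnn : 0 ≤ a₁ + δ₁ := by linarith
    have h4 := mul_le_mul_of_nonneg_left hsx hnn
    have h5 : ε₁ * Qx = Qx / 2 + (-((a₁ + δ₁) * (c₂ * Qx))) := by rw [hε₁def]; ring
    linarith
  -- upper bound for J u 0 yu
  have hhigh : J u (fun _ => 0) yu ≤ -(ε₂ * Qy) + C₂ := by
    rw [hJ]
    have h1 : ∑ k ∈ Finset.Icc 1 (T + 1),
        ((((fun _ => (0:ℝ)) k - (fun _ => (0:ℝ)) (k - 1)) ^ 2 / 2) - (yu k - yu (k - 1)) ^ 2 / 2)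
        = -(Qy / 2) := by
      calc ∑ k ∈ Finset.Icc 1 (T + 1),
            ((((fun _ => (0:ℝ)) k - (fun _ => (0:ℝ)) (k - 1)) ^ 2 / 2) - (yu k - yu (k - 1)) ^ 2 / 2)
          = ∑ k ∈ Finset.Icc 1 (T + 1), -((yu k - yu (k - 1)) ^ 2 / 2) :=
            Finset.sum_congr rfl fun k _ => by norm_num
        _ = -(∑ k ∈ Finset.Icc 1 (T + 1), (yu k - yu (k - 1)) ^ 2 / 2) := Finset.sum_neg_distrib _
        _ = -(Qy / 2) := by rw [hQydef, Finset.sum_div]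
    have h2 : ∑ k ∈ Finset.Icc 1 T, F k ((fun _ => (0:ℝ)) k) (yu k) (u k)
        ≤ ∑ k ∈ Finset.Icc 1 T, ((a₂ + δ₂) * (yu k) ^ 2 + (γ₂ k + β₂ ^ 2 / (4 * δ₂))) := by
      refine Finset.sum_le_sum fun k hk => ?_
      have hb := hF2 k hk (yu k) (u k) (hu k)
      have hy := young_aux δ₂ (-β₂) (yu k) hδ₂
      have h2' : α₂ ≤ a₂ := le_max_left _ _
      have hnb : (-β₂) ^ 2 = β₂ ^ 2 := by ring
      rw [hnb] at hy
      nlinarith [mul_nonneg (sub_nonneg.mpr h2') (sq_nonneg (yu k))]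
    have h3 : ∑ k ∈ Finset.Icc 1 T, ((a₂ + δ₂) * (yu k) ^ 2 + (γ₂ k + β₂ ^ 2 / (4 * δ₂)))
        = (a₂ + δ₂) * (∑ k ∈ Finset.Icc 1 T, (yu k) ^ 2) + C₂ := by
      rw [Finset.sum_add_distrib, ← Finset.mul_sum, hC₂def]
    rw [h1]
    rw [h3] at h2
    have hnn : 0 ≤ a₂ + δ₂ := by linarith
    have h4 := mul_le_mul_of_nonneg_left hsy hnn
    have h5 : -(ε₂ * Qy) = -(Qy / 2) + (a₂ + δ₂) * (c₂ * Qy) := by rw [hε₂def]; ring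
    linarith
  -- saddle inequalities with the zero test functions
  have hs1 := (hsaddle (fun _ => 0) hz (fun _ => 0) hz).1
  have hs2 := (hsaddle (fun _ => 0) hz (fun _ => 0) hz).2
  -- hs1 : J u xu 0 ≤ J u xu yu ; hs2 : J u xu yu ≤ J u 0 yu
  have hkey : ε₁ * Qx + C₁ ≤ -(ε₂ * Qy) + C₂ := by linarith
  have hx : Qx ≤ (C₂ - C₁) / ε₁ := by
    rw [le_div_iff₀ hε₁pos]
    nlinarith [mul_nonneg hε₂pos.le hQynn]
  have hy' : Qy ≤ (C₂ - C₁) / ε₂ := by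
    rw [le_div_iff₀ hε₂pos]
    nlinarith [mul_nonneg hε₁pos.le hQxnn]
  constructor
  · exact le_trans (Real.sqrt_le_sqrt hx) (le_max_right _ _)
  · exact le_trans (Real.sqrt_le_sqrt hy') (le_max_right _ _)
end

section
/- Assume the hypotheses H1–H5 of the paper hold for F : {1,...,T} × ℝ × ℝ × [−D,D] → ℝ (with bounds uniform in the parameter u, |u| ≤ D). Let u_n → u₀ uniformly with ‖u_n‖_C ≤ D, and let (x_n, y_n) be any solution of the discrete system Δ²x_n(k−1) = F_x(k,x_n(k),y_n(k),u_n(k)), Δ²y_n(k−1) = −F_y(k,x_n(k),y_n(k),u_n(k)) with zero Dirichlet boundary conditions that is a saddle point of the associated functional J_n. Then there is a subsequence (x_{n_i}, y_{n_i}) converging to some (x₀, y₀) ∈ H × H, and (x₀, y₀) solves the system with parameter u₀: Δ²x₀(k−1) = F_x(k,x₀(k),y₀(k),u₀(k)), Δ²y₀(k−1) = −F_y(k,x₀(k),y₀(k),u₀(k)), x₀(0)=x₀(T+1)=y₀(0)=y₀(T+1)=0. -/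
open Finset Filter Topology

private lemma aux_quad (ε β s : ℝ) (hε : 0 < ε) :
    -(ε * s ^ 2) - β ^ 2 / (4 * ε) ≤ β * s := by
  have h4 : (0:ℝ) < 4 * ε := by linarith
  have hd : β ^ 2 / (4 * ε) * (4 * ε) = β ^ 2 := div_mul_cancel₀ _ (ne_of_gt h4)
  nlinarith [sq_nonneg (2 * ε * s + β), hε, sq_nonneg s]

private lemma aux_quad' (ε β s : ℝ) (hε : 0 < ε) :
    β * s ≤ ε * s ^ 2 + β ^ 2 / (4 * ε) := by
  have h4 : (0:ℝ) < 4 * ε := by linarith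
  have hd : β ^ 2 / (4 * ε) * (4 * ε) = β ^ 2 := div_mul_cancel₀ _ (ne_of_gt h4)
  nlinarith [sq_nonneg (2 * ε * s - β), hε, sq_nonneg s]

set_option maxHeartbeats 1000000 in
/-- Continuous dependence on parameters: if `u_n → u₀` uniformly (`‖u_n‖_C ≤ D`) and
`(x_n, y_n)` are saddle-point solutions of the discrete system with parameter `u_n`,
then a subsequence converges to a pair `(x₀, y₀)` solving the system with parameter `u₀`. -/
theorem stmt_19 (T : ℕ) (hT : 1 ≤ T) (D : ℝ) (hD : 0 < D)
    (S : Set (ℕ → ℝ))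
    (hS : S = {x : ℕ → ℝ | x 0 = 0 ∧ ∀ k, T + 1 ≤ k → x k = 0})
    (c₂ : ℝ) (hc₂pos : 0 < c₂)
    (hc₂ : ∀ x ∈ S, ∑ k ∈ Finset.Icc 1 T, (x k) ^ 2 ≤
      c₂ * ∑ k ∈ Finset.Icc 1 (T + 1), (x k - x (k - 1)) ^ 2)
    (F Fx Fy : ℕ → ℝ → ℝ → ℝ → ℝ)
    -- H1: continuity of F, F_x, F_y and differentiability of F:
    (hF : ∀ k, Continuous (fun p : ℝ × ℝ × ℝ => F k p.1 p.2.1 p.2.2))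
    (hFx : ∀ k s t u, HasDerivAt (fun s' => F k s' t u) (Fx k s t u) s)
    (hFy : ∀ k s t u, HasDerivAt (fun t' => F k s t' u) (Fy k s t u) t)
    (hFxcont : ∀ k, Continuous (fun p : ℝ × ℝ × ℝ => Fx k p.1 p.2.1 p.2.2))
    (hFycont : ∀ k, Continuous (fun p : ℝ × ℝ × ℝ => Fy k p.1 p.2.1 p.2.2))
    (J : (ℕ → ℝ) → (ℕ → ℝ) → (ℕ → ℝ) → ℝ)
    (hJ : ∀ u x y, J u x y =
      (∑ k ∈ Finset.Icc 1 (T + 1),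
        ((x k - x (k - 1)) ^ 2 / 2 - (y k - y (k - 1)) ^ 2 / 2)) +
      ∑ k ∈ Finset.Icc 1 T, F k (x k) (y k) (u k))
    -- H2 (uniform in |u| ≤ D):
    (H2 : ∀ y ∈ S, ∃ α₁ β₁ : ℝ, ∃ γ₁ : ℕ → ℝ, α₁ < 1 / (2 * c₂) ∧
      ∀ k ∈ Finset.Icc 1 T, ∀ s u : ℝ, |u| ≤ D →
        -α₁ * s ^ 2 + β₁ * s + γ₁ k ≤ F k s (y k) u)
    -- H3 (uniform in |u| ≤ D):
    (H3 : ∀ x ∈ S, ∃ α₂ β₂ : ℝ, ∃ γ₂ : ℕ → ℝ, α₂ < 1 / (2 * c₂) ∧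
      ∀ k ∈ Finset.Icc 1 T, ∀ t u : ℝ, |u| ≤ D →
        F k (x k) t u ≤ α₂ * t ^ 2 + β₂ * t + γ₂ k)
    -- H4, H5:
    (H4 : ∀ u : ℕ → ℝ, (∀ k, |u k| ≤ D) → ∀ y ∈ S, ConvexOn ℝ S (fun x => J u x y))
    (H5 : ∀ u : ℕ → ℝ, (∀ k, |u k| ≤ D) → ∀ x ∈ S, ConcaveOn ℝ S (fun y => J u x y))
    -- the parameters:
    (u : ℕ → ℕ → ℝ) (u₀ : ℕ → ℝ)
    (hu : ∀ n k, |u n k| ≤ D) (hu₀ : ∀ k, |u₀ k| ≤ D)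
    (huconv : ∀ ε > (0 : ℝ), ∃ n₀ : ℕ, ∀ n ≥ n₀, ∀ k ∈ Finset.Icc 1 T,
      |u n k - u₀ k| ≤ ε)
    -- the saddle-point solutions (x_n, y_n):
    (xs ys : ℕ → ℕ → ℝ)
    (hmem : ∀ n, xs n ∈ S ∧ ys n ∈ S)
    (hsol : ∀ n, ∀ k ∈ Finset.Icc 1 T,
      xs n (k + 1) - 2 * xs n k + xs n (k - 1) = Fx k (xs n k) (ys n k) (u n k) ∧
      ys n (k + 1) - 2 * ys n k + ys n (k - 1) = -(Fy k (xs n k) (ys n k) (u n k)))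
    (hsaddle : ∀ n, ∀ x ∈ S, ∀ y ∈ S,
      J (u n) (xs n) y ≤ J (u n) (xs n) (ys n) ∧
      J (u n) (xs n) (ys n) ≤ J (u n) x (ys n)) :
    ∃ φ : ℕ → ℕ, StrictMono φ ∧ ∃ x₀ ∈ S, ∃ y₀ ∈ S,
      (∀ k, Filter.Tendsto (fun i => xs (φ i) k) Filter.atTop (nhds (x₀ k))) ∧
      (∀ k, Filter.Tendsto (fun i => ys (φ i) k) Filter.atTop (nhds (y₀ k))) ∧
      (∀ k ∈ Finset.Icc 1 T,
        x₀ (k + 1) - 2 * x₀ k + x₀ (k - 1) = Fx k (x₀ k) (y₀ k) (u₀ k) ∧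
        y₀ (k + 1) - 2 * y₀ k + y₀ (k - 1) = -(Fy k (x₀ k) (y₀ k) (u₀ k))) ∧
      x₀ 0 = 0 ∧ x₀ (T + 1) = 0 ∧ y₀ 0 = 0 ∧ y₀ (T + 1) = 0 := by
  classical
  -- the zero function
  set z : ℕ → ℝ := fun _ => 0 with hzdef
  have hz : z ∈ S := by rw [hS]; exact ⟨rfl, fun k _ => rfl⟩
  obtain ⟨α₁, β₁, γ₁, hα₁, hH2⟩ := H2 z hz
  obtain ⟨α₂, β₂, γ₂, hα₂, hH3⟩ := H3 z hz
  have hcinv : 0 < 1 / (2 * c₂) := by positivity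
  set α₁' : ℝ := max α₁ 0 with hα₁'def
  set α₂' : ℝ := max α₂ 0 with hα₂'def
  have hα₁' : α₁' < 1/(2*c₂) := max_lt hα₁ hcinv
  have hα₂' : α₂' < 1/(2*c₂) := max_lt hα₂ hcinv
  set ε₁ : ℝ := (1/(2*c₂) - α₁')/2 with hε₁def
  set ε₂ : ℝ := (1/(2*c₂) - α₂')/2 with hε₂def
  have hε₁ : 0 < ε₁ := by rw [hε₁def]; linarith
  have hε₂ : 0 < ε₂ := by rw [hε₂def]; linarith
  set a : ℝ := 1/2 - (α₁' + ε₁)*c₂ with hadef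
  set b : ℝ := 1/2 - (α₂' + ε₂)*c₂ with hbdef
  have hhalf : (1/(2*c₂)) * c₂ = 1/2 := by field_simp
  have ha : 0 < a := by
    have h3 : α₁' + ε₁ < 1/(2*c₂) := by rw [hε₁def]; linarith
    rw [hadef]; nlinarith [hc₂pos]
  have hb : 0 < b := by
    have h3 : α₂' + ε₂ < 1/(2*c₂) := by rw [hε₂def]; linarith
    rw [hbdef]; nlinarith [hc₂pos]
  set C₁ : ℝ := (∑ k ∈ Finset.Icc 1 T, γ₁ k) - T * (β₁^2/(4*ε₁)) with hC₁def
  set C₂ : ℝ := (∑ k ∈ Finset.Icc 1 T, γ₂ k) + T * (β₂^2/(4*ε₂)) with hC₂def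
  set X : ℕ → ℝ := fun n => ∑ k ∈ Finset.Icc 1 (T+1), (xs n k - xs n (k-1))^2 with hXdef
  set Y : ℕ → ℝ := fun n => ∑ k ∈ Finset.Icc 1 (T+1), (ys n k - ys n (k-1))^2 with hYdef
  have hXnonneg : ∀ n, 0 ≤ X n := fun n => Finset.sum_nonneg (fun k _ => sq_nonneg _)
  have hYnonneg : ∀ n, 0 ≤ Y n := fun n => Finset.sum_nonneg (fun k _ => sq_nonneg _)
  -- lower bound on J (u n) (xs n) z
  have hlow : ∀ n, a * X n + C₁ ≤ J (u n) (xs n) z := by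
    intro n
    rw [hJ]
    have h1 : ∑ k ∈ Finset.Icc 1 (T+1),
        ((xs n k - xs n (k-1))^2/2 - (z k - z (k-1))^2/2) = X n / 2 := by
      show _ = (∑ k ∈ Finset.Icc 1 (T+1), (xs n k - xs n (k-1))^2) / 2
      rw [Finset.sum_div]
      exact Finset.sum_congr rfl (fun k _ => by simp [hzdef])
    have h2 : ∀ k ∈ Finset.Icc 1 T,
        -(α₁'+ε₁) * (xs n k)^2 + (γ₁ k - β₁^2/(4*ε₁)) ≤ F k (xs n k) (z k) (u n k) := by
      intro k hk
      have hb' := hH2 k hk (xs n k) (u n k) (hu n k)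
      have hq := aux_quad ε₁ β₁ (xs n k) hε₁
      have hm : α₁ * (xs n k)^2 ≤ α₁' * (xs n k)^2 :=
        mul_le_mul_of_nonneg_right (le_max_left _ _) (sq_nonneg _)
      linarith
    have h3 := Finset.sum_le_sum h2
    have h4 : ∑ k ∈ Finset.Icc 1 T, (-(α₁'+ε₁) * (xs n k)^2 + (γ₁ k - β₁^2/(4*ε₁)))
        = -(α₁'+ε₁) * (∑ k ∈ Finset.Icc 1 T, (xs n k)^2) + C₁ := by
      rw [Finset.sum_add_distrib, Finset.sum_sub_distrib, ← Finset.mul_sum,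
        Finset.sum_const, Nat.card_Icc, hC₁def]
      simp [nsmul_eq_mul]
    have h6 : 0 ≤ α₁' + ε₁ := by
      have := le_max_right α₁ (0:ℝ); rw [hα₁'def]; linarith
    have h7 := mul_le_mul_of_nonneg_left (hc₂ (xs n) (hmem n).1) h6
    have hXeq : (∑ k ∈ Finset.Icc 1 (T+1), (xs n k - xs n (k-1))^2) = X n := rfl
    rw [hXeq] at h7
    rw [h1, hadef]
    linarith [h3, h4, h7]
  -- upper bound on J (u n) z (ys n)
  have hupp : ∀ n, J (u n) z (ys n) ≤ -(b * Y n) + C₂ := by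
    intro n
    rw [hJ]
    have h1 : ∑ k ∈ Finset.Icc 1 (T+1),
        ((z k - z (k-1))^2/2 - (ys n k - ys n (k-1))^2/2) = -(Y n / 2) := by
      show _ = -((∑ k ∈ Finset.Icc 1 (T+1), (ys n k - ys n (k-1))^2) / 2)
      rw [Finset.sum_div, ← Finset.sum_neg_distrib]
      exact Finset.sum_congr rfl (fun k _ => by simp [hzdef])
    have h2 : ∀ k ∈ Finset.Icc 1 T,
        F k (z k) (ys n k) (u n k) ≤ (α₂'+ε₂) * (ys n k)^2 + (γ₂ k + β₂^2/(4*ε₂)) := by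
      intro k hk
      have hb' := hH3 k hk (ys n k) (u n k) (hu n k)
      have hq := aux_quad' ε₂ β₂ (ys n k) hε₂
      have hm : α₂ * (ys n k)^2 ≤ α₂' * (ys n k)^2 :=
        mul_le_mul_of_nonneg_right (le_max_left _ _) (sq_nonneg _)
      linarith
    have h3 := Finset.sum_le_sum h2
    have h4 : ∑ k ∈ Finset.Icc 1 T, ((α₂'+ε₂) * (ys n k)^2 + (γ₂ k + β₂^2/(4*ε₂)))
        = (α₂'+ε₂) * (∑ k ∈ Finset.Icc 1 T, (ys n k)^2) + C₂ := by
      rw [Finset.sum_add_distrib, Finset.sum_add_distrib, ← Finset.mul_sum,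
        Finset.sum_const, Nat.card_Icc, hC₂def]
      simp [nsmul_eq_mul]
    have h6 : 0 ≤ α₂' + ε₂ := by
      have := le_max_right α₂ (0:ℝ); rw [hα₂'def]; linarith
    have h7 := mul_le_mul_of_nonneg_left (hc₂ (ys n) (hmem n).2) h6
    have hYeq : (∑ k ∈ Finset.Icc 1 (T+1), (ys n k - ys n (k-1))^2) = Y n := rfl
    rw [hYeq] at h7
    rw [h1, hbdef]
    linarith [h3, h4, h7]
  -- combine via the saddle point property
  have hcomb : ∀ n, a * X n + b * Y n ≤ C₂ - C₁ := by
    intro n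
    obtain ⟨hs1, hs2⟩ := hsaddle n z hz z hz
    have := hlow n
    have := hupp n
    linarith
  -- uniform bound
  set B : ℝ := max (c₂ * ((C₂ - C₁)/a)) (c₂ * ((C₂ - C₁)/b)) with hBdef
  set R : ℝ := Real.sqrt B with hRdef
  have hR0 : 0 ≤ R := Real.sqrt_nonneg _
  have hbound : ∀ n k, |xs n k| ≤ R ∧ |ys n k| ≤ R := by
    intro n k
    have hXb : c₂ * X n ≤ B := by
      have h1 : X n ≤ (C₂ - C₁)/a := by
        rw [le_div_iff₀ ha]
        linarith [hcomb n, mul_nonneg hb.le (hYnonneg n)]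
      calc c₂ * X n ≤ c₂ * ((C₂ - C₁)/a) := mul_le_mul_of_nonneg_left h1 hc₂pos.le
        _ ≤ B := le_max_left _ _
    have hYb : c₂ * Y n ≤ B := by
      have h1 : Y n ≤ (C₂ - C₁)/b := by
        rw [le_div_iff₀ hb]
        linarith [hcomb n, mul_nonneg ha.le (hXnonneg n)]
      calc c₂ * Y n ≤ c₂ * ((C₂ - C₁)/b) := mul_le_mul_of_nonneg_left h1 hc₂pos.le
        _ ≤ B := le_max_right _ _
    by_cases hk : k ∈ Finset.Icc 1 T
    · constructor
      · refine Real.abs_le_sqrt ?_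
        have h1 : (xs n k)^2 ≤ ∑ j ∈ Finset.Icc 1 T, (xs n j)^2 :=
          Finset.single_le_sum (f := fun j => (xs n j)^2) (fun j _ => sq_nonneg _) hk
        have h2 := h1.trans (hc₂ (xs n) (hmem n).1)
        have hXeq : (∑ j ∈ Finset.Icc 1 (T+1), (xs n j - xs n (j-1))^2) = X n := rfl
        rw [hXeq] at h2
        linarith
      · refine Real.abs_le_sqrt ?_
        have h1 : (ys n k)^2 ≤ ∑ j ∈ Finset.Icc 1 T, (ys n j)^2 :=
          Finset.single_le_sum (f := fun j => (ys n j)^2) (fun j _ => sq_nonneg _) hk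
        have h2 := h1.trans (hc₂ (ys n) (hmem n).2)
        have hYeq : (∑ j ∈ Finset.Icc 1 (T+1), (ys n j - ys n (j-1))^2) = Y n := rfl
        rw [hYeq] at h2
        linarith
    · simp only [Finset.mem_Icc, not_and, not_le] at hk
      have hx0 : xs n k = 0 := by
        have hx := hmem n |>.1
        rw [hS] at hx
        rcases Nat.eq_zero_or_pos k with h0 | h1
        · rw [h0]; exact hx.1
        · exact hx.2 k (by omega)
      have hy0 : ys n k = 0 := by
        have hy := hmem n |>.2
        rw [hS] at hy
        rcases Nat.eq_zero_or_pos k with h0 | h1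
        · rw [h0]; exact hy.1
        · exact hy.2 k (by omega)
      rw [hx0, hy0]; simp [hR0]
  -- compactness argument
  set f : ℕ → ((Fin (T+2) → ℝ) × (Fin (T+2) → ℝ)) :=
    fun n => (fun m => xs n m, fun m => ys n m) with hfdef
  set K1 : Set (Fin (T+2) → ℝ) := Set.univ.pi fun _ => Set.Icc (-R) R with hK1def
  have hK1 : IsCompact K1 := isCompact_univ_pi fun _ => isCompact_Icc
  have hK : IsCompact (K1 ×ˢ K1) := hK1.prod hK1
  have hf : ∀ n, f n ∈ K1 ×ˢ K1 := by
    intro n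
    constructor
    · intro m _
      exact Set.mem_Icc.2 (abs_le.1 (hbound n m).1)
    · intro m _
      exact Set.mem_Icc.2 (abs_le.1 (hbound n m).2)
  obtain ⟨p, hpmem, φ, hφ, hconv⟩ := hK.tendsto_subseq hf
  -- coordinate-wise convergence
  have hx1 : ∀ m : Fin (T+2), Tendsto (fun i => xs (φ i) m) atTop (𝓝 (p.1 m)) := by
    intro m
    have hc : Continuous fun q : (Fin (T+2) → ℝ) × (Fin (T+2) → ℝ) => q.1 m :=
      (continuous_apply m).comp continuous_fst
    exact (hc.tendsto p).comp hconv
  have hy1 : ∀ m : Fin (T+2), Tendsto (fun i => ys (φ i) m) atTop (𝓝 (p.2 m)) := by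
    intro m
    have hc : Continuous fun q : (Fin (T+2) → ℝ) × (Fin (T+2) → ℝ) => q.2 m :=
      (continuous_apply m).comp continuous_snd
    exact (hc.tendsto p).comp hconv
  set x₀ : ℕ → ℝ := fun k => if h : k < T + 2 then p.1 ⟨k, h⟩ else 0 with hx₀def
  set y₀ : ℕ → ℝ := fun k => if h : k < T + 2 then p.2 ⟨k, h⟩ else 0 with hy₀def
  have hxzero : ∀ n k, T + 1 ≤ k → xs n k = 0 := by
    intro n k hk
    have hx := hmem n |>.1; rw [hS] at hx; exact hx.2 k hk
  have hyzero : ∀ n k, T + 1 ≤ k → ys n k = 0 := by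
    intro n k hk
    have hy := hmem n |>.2; rw [hS] at hy; exact hy.2 k hk
  have hx0conv : ∀ k, Tendsto (fun i => xs (φ i) k) atTop (𝓝 (x₀ k)) := by
    intro k
    by_cases h : k < T + 2
    · have := hx1 ⟨k, h⟩
      simpa [hx₀def, h] using this
    · have hzero : ∀ i, xs (φ i) k = 0 := fun i => hxzero (φ i) k (by omega)
      simp only [hx₀def, dif_neg h]
      simp only [hzero]
      exact tendsto_const_nhds
  have hy0conv : ∀ k, Tendsto (fun i => ys (φ i) k) atTop (𝓝 (y₀ k)) := by
    intro k
    by_cases h : k < T + 2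
    · have := hy1 ⟨k, h⟩
      simpa [hy₀def, h] using this
    · have hzero : ∀ i, ys (φ i) k = 0 := fun i => hyzero (φ i) k (by omega)
      simp only [hy₀def, dif_neg h]
      simp only [hzero]
      exact tendsto_const_nhds
  -- boundary values
  have hx00 : x₀ 0 = 0 := by
    refine tendsto_nhds_unique (hx0conv 0) ?_
    have hzero : ∀ i, xs (φ i) 0 = 0 := by
      intro i; have hx := hmem (φ i) |>.1; rw [hS] at hx; exact hx.1
    simp only [hzero]; exact tendsto_const_nhds
  have hy00 : y₀ 0 = 0 := by
    refine tendsto_nhds_unique (hy0conv 0) ?_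
    have hzero : ∀ i, ys (φ i) 0 = 0 := by
      intro i; have hy := hmem (φ i) |>.2; rw [hS] at hy; exact hy.1
    simp only [hzero]; exact tendsto_const_nhds
  have hx0T : ∀ k, T + 1 ≤ k → x₀ k = 0 := by
    intro k hk
    refine tendsto_nhds_unique (hx0conv k) ?_
    have hzero : ∀ i, xs (φ i) k = 0 := fun i => hxzero (φ i) k hk
    simp only [hzero]; exact tendsto_const_nhds
  have hy0T : ∀ k, T + 1 ≤ k → y₀ k = 0 := by
    intro k hk
    refine tendsto_nhds_unique (hy0conv k) ?_
    have hzero : ∀ i, ys (φ i) k = 0 := fun i => hyzero (φ i) k hk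
    simp only [hzero]; exact tendsto_const_nhds
  have hx₀S : x₀ ∈ S := by rw [hS]; exact ⟨hx00, hx0T⟩
  have hy₀S : y₀ ∈ S := by rw [hS]; exact ⟨hy00, hy0T⟩
  -- convergence of the parameter
  have huk : ∀ k ∈ Finset.Icc 1 T, Tendsto (fun i => u (φ i) k) atTop (𝓝 (u₀ k)) := by
    intro k hk
    have h1 : Tendsto (fun n => u n k) atTop (𝓝 (u₀ k)) := by
      rw [Metric.tendsto_atTop]
      intro ε hε
      obtain ⟨n₀, hn₀⟩ := huconv (ε/2) (by linarith)
      refine ⟨n₀, fun n hn => ?_⟩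
      have := hn₀ n hn k hk
      rw [Real.dist_eq]
      linarith
    exact h1.comp hφ.tendsto_atTop
  -- pass to the limit in the equations
  refine ⟨φ, hφ, x₀, hx₀S, y₀, hy₀S, hx0conv, hy0conv, ?_, hx00,
    hx0T (T+1) le_rfl, hy00, hy0T (T+1) le_rfl⟩
  intro k hk
  have hLHSx : Tendsto (fun i => xs (φ i) (k+1) - 2 * xs (φ i) k + xs (φ i) (k-1))
      atTop (𝓝 (x₀ (k+1) - 2 * x₀ k + x₀ (k-1))) :=
    ((hx0conv (k+1)).sub ((hx0conv k).const_mul 2)).add (hx0conv (k-1))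
  have hLHSy : Tendsto (fun i => ys (φ i) (k+1) - 2 * ys (φ i) k + ys (φ i) (k-1))
      atTop (𝓝 (y₀ (k+1) - 2 * y₀ k + y₀ (k-1))) :=
    ((hy0conv (k+1)).sub ((hy0conv k).const_mul 2)).add (hy0conv (k-1))
  have htriple : Tendsto (fun i => ((xs (φ i) k, ys (φ i) k, u (φ i) k) : ℝ × ℝ × ℝ))
      atTop (𝓝 (x₀ k, y₀ k, u₀ k)) :=
    (hx0conv k).prodMk_nhds ((hy0conv k).prodMk_nhds (huk k hk))
  have hRHSx : Tendsto (fun i => Fx k (xs (φ i) k) (ys (φ i) k) (u (φ i) k))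
      atTop (𝓝 (Fx k (x₀ k) (y₀ k) (u₀ k))) :=
    ((hFxcont k).tendsto _).comp htriple
  have hRHSy : Tendsto (fun i => Fy k (xs (φ i) k) (ys (φ i) k) (u (φ i) k))
      atTop (𝓝 (Fy k (x₀ k) (y₀ k) (u₀ k))) :=
    ((hFycont k).tendsto _).comp htriple
  constructor
  · refine tendsto_nhds_unique hLHSx ?_
    exact hRHSx.congr (fun i => ((hsol (φ i) k hk).1).symm)
  · refine tendsto_nhds_unique hLHSy ?_
    exact (hRHSy.neg).congr (fun i => ((hsol (φ i) k hk).2).symm)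
end
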